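/- arXiv:2111.08838 — 3 statements merged into one kernel-verified Lean document; each statement's English description precedes it below -/
import Mathlib

section
/- For all integers n ≥ 1 and m ≥ 3, the corona graph P_n ∘ C_m is total edge product cordial; that is, there exists an edge labeling f* : E(P_n ∘ C_m) → {0,1} whose induced vertex labeling f satisfies |(v_f(0) + e_f(0)) − (v_f(1) + e_f(1))| ≤ 1. -/
open scoped Classical
open Finset SimpleGraph

/-- Adjacency relation of the corona product `G ∘ H`: take one copy of `G` and,
for each vertex `i` of `G`, a copy of `H` (indexed by `i`), joining `i` to every
vertex of its copy of `H`. -/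
def coronaAdj {α β : Type*} (G : SimpleGraph α) (H : SimpleGraph β) :
    α ⊕ α × β → α ⊕ α × β → Prop
  | Sum.inl u, Sum.inl v => G.Adj u v
  | Sum.inl u, Sum.inr (i, _) => u = i
  | Sum.inr (i, _), Sum.inl u => u = i
  | Sum.inr (i, x), Sum.inr (j, y) => i = j ∧ H.Adj x y

/-- The corona product `G ∘ H` of two simple graphs. -/
def corona {α β : Type*} (G : SimpleGraph α) (H : SimpleGraph β) :
    SimpleGraph (α ⊕ α × β) where
  Adj := coronaAdj G H
  symm := by
    constructor
    rintro (u | ⟨i, x⟩) (v | ⟨j, y⟩) h <;>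
      simp only [coronaAdj] at h ⊢
    · exact h.symm
    · exact h
    · exact h
    · exact ⟨h.1.symm, h.2.symm⟩
  loopless := by
    constructor
    rintro (u | ⟨i, x⟩) h <;> simp only [coronaAdj] at h
    · exact G.loopless.irrefl u h
    · exact H.loopless.irrefl x h.2

/-- The vertex labeling induced by an edge labeling `f`: the label of `v` is the
product of the labels of the edges incident to `v` (an empty product is `1`). -/
noncomputable def inducedLabel {α : Type*} [Fintype α] (G : SimpleGraph α)
    (f : Sym2 α → ℕ) (v : α) : ℕ :=
  ∏ u ∈ Finset.univ.filter (fun u => G.Adj v u), f s(v, u)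

/-- `eCount G f i` is the number of edges of `G` labeled `i` by `f`. -/
noncomputable def eCount {α : Type*} [Fintype α] (G : SimpleGraph α)
    (f : Sym2 α → ℕ) (i : ℕ) : ℕ :=
  (G.edgeFinset.filter (fun e => f e = i)).card

/-- `vCount G f i` is the number of vertices of `G` whose induced label is `i`. -/
noncomputable def vCount {α : Type*} [Fintype α] (G : SimpleGraph α)
    (f : Sym2 α → ℕ) (i : ℕ) : ℕ :=
  (Finset.univ.filter (fun v => inducedLabel G f v = i)).card

/-- `f` is a total edge product cordial labeling of `G`: it labels every edge `0` or `1`,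
and `|(v_f(0) + e_f(0)) - (v_f(1) + e_f(1))| ≤ 1`. -/
def IsTotalEdgeProductCordialLabeling {α : Type*} [Fintype α] (G : SimpleGraph α)
    (f : Sym2 α → ℕ) : Prop :=
  (∀ e ∈ G.edgeSet, f e = 0 ∨ f e = 1) ∧
  |((vCount G f 0 : ℤ) + (eCount G f 0 : ℤ)) - ((vCount G f 1 : ℤ) + (eCount G f 1 : ℤ))| ≤ 1

/-- `G` is total edge product cordial if it admits a total edge product cordial labeling. -/
def IsTotalEdgeProductCordial {α : Type*} [Fintype α] (G : SimpleGraph α) : Prop :=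
  ∃ f : Sym2 α → ℕ, IsTotalEdgeProductCordialLabeling G f

namespace TotalEPC

open Sum

section Generic

variable {α β : Type*}

lemma corona_adj_inl_inl {G : SimpleGraph α} {H : SimpleGraph β} {u v : α} :
    (corona G H).Adj (inl u) (inl v) ↔ G.Adj u v := Iff.rfl

lemma corona_adj_inl_inr {G : SimpleGraph α} {H : SimpleGraph β} {u i : α} {x : β} :
    (corona G H).Adj (inl u) (inr (i, x)) ↔ u = i := Iff.rfl

lemma corona_adj_inr_inl {G : SimpleGraph α} {H : SimpleGraph β} {u i : α} {x : β} :
    (corona G H).Adj (inr (i, x)) (inl u) ↔ u = i := Iff.rfl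

lemma corona_adj_inr_inr {G : SimpleGraph α} {H : SimpleGraph β} {i j : α} {x y : β} :
    (corona G H).Adj (inr (i, x)) (inr (j, y)) ↔ i = j ∧ H.Adj x y := Iff.rfl

lemma ite01_eq_zero_iff {C : Prop} [Decidable C] :
    (if C then (0 : ℕ) else 1) = 0 ↔ C := by
  split_ifs with h <;> simp [h]

lemma inducedLabel_eq_zero_iff [Fintype α] (G : SimpleGraph α) (f : Sym2 α → ℕ) (v : α) :
    inducedLabel G f v = 0 ↔ ∃ u, G.Adj v u ∧ f s(v, u) = 0 := by
  unfold inducedLabel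
  rw [Finset.prod_eq_zero_iff]
  constructor
  · rintro ⟨u, hu, h⟩; exact ⟨u, (Finset.mem_filter.mp hu).2, h⟩
  · rintro ⟨u, hadj, h⟩; exact ⟨u, Finset.mem_filter.mpr ⟨Finset.mem_univ _, hadj⟩, h⟩

lemma inducedLabel_zero_or_one [Fintype α] (G : SimpleGraph α) (f : Sym2 α → ℕ)
    (h01 : ∀ e, f e = 0 ∨ f e = 1) (v : α) :
    inducedLabel G f v = 0 ∨ inducedLabel G f v = 1 := by
  rcases eq_or_ne (inducedLabel G f v) 0 with h | h
  · exact Or.inl h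
  · right
    unfold inducedLabel at *
    refine Finset.prod_eq_one fun u hu => ?_
    rcases h01 s(v, u) with h0 | h1
    · exact absurd (Finset.prod_eq_zero hu h0) h
    · exact h1

lemma vCount_partition [Fintype α] (G : SimpleGraph α) (f : Sym2 α → ℕ)
    (h01 : ∀ e, f e = 0 ∨ f e = 1) :
    vCount G f 0 + vCount G f 1 = Fintype.card α := by
  unfold vCount
  have h : (Finset.univ.filter fun v => inducedLabel G f v = 1)
      = Finset.univ.filter fun v => ¬ (inducedLabel G f v = 0) := by
    apply Finset.filter_congr
    intro v _
    rcases inducedLabel_zero_or_one G f h01 v with h | h <;> simp [h]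
  rw [h, Finset.card_filter_add_card_filter_not, Finset.card_univ]

lemma eCount_partition [Fintype α] (G : SimpleGraph α) (f : Sym2 α → ℕ)
    (h01 : ∀ e, f e = 0 ∨ f e = 1) :
    eCount G f 0 + eCount G f 1 = G.edgeFinset.card := by
  unfold eCount
  have h : (G.edgeFinset.filter fun e => f e = 1)
      = G.edgeFinset.filter fun e => ¬ (f e = 0) := by
    apply Finset.filter_congr
    intro e _
    rcases h01 e with h | h <;> simp [h]
  rw [h, Finset.card_filter_add_card_filter_not]

lemma card_filter_sum [Fintype α] [Fintype β] (P : α ⊕ β → Prop) [DecidablePred P] :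
    (Finset.univ.filter P).card
      = ((Finset.univ : Finset α).filter fun a => P (inl a)).card
        + ((Finset.univ : Finset β).filter fun b => P (inr b)).card := by
  have hU : (Finset.univ : Finset (α ⊕ β))
      = (Finset.univ : Finset α).image inl ∪ (Finset.univ : Finset β).image inr := by
    ext (x | x) <;> simp
  have hdisj : Disjoint (((Finset.univ : Finset α).filter fun a => P (inl a)).image inl)
      (((Finset.univ : Finset β).filter fun b => P (inr b)).image inr) := by
    refine Finset.disjoint_left.mpr ?_
    intro e h1 h2
    obtain ⟨a, _, rfl⟩ := Finset.mem_image.mp h1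
    obtain ⟨b, _, hb⟩ := Finset.mem_image.mp h2
    simp at hb
  rw [hU, Finset.filter_union, Finset.filter_image, Finset.filter_image,
    Finset.card_union_of_disjoint hdisj,
    Finset.card_image_of_injective _ Sum.inl_injective,
    Finset.card_image_of_injective _ Sum.inr_injective]

lemma adj_of_sym2_eq {G : SimpleGraph α} {u v w1 w2 : α}
    (h : s(u, v) = s(w1, w2)) (hadj : G.Adj w1 w2) : G.Adj u v := by
  rw [Sym2.eq_iff] at h
  rcases h with ⟨rfl, rfl⟩ | ⟨rfl, rfl⟩
  · exact hadj
  · exact hadj.symm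

lemma card_range_filter' (NN KK : ℕ) (hK : KK ≤ NN) (P : ℕ → Prop) [DecidablePred P]
    (hP : ∀ i, i < NN → (P i ↔ i < KK)) :
    ((Finset.range NN).filter P).card = KK := by
  have h : (Finset.range NN).filter P = Finset.range KK := by
    ext i
    simp only [Finset.mem_filter, Finset.mem_range]
    constructor
    · rintro ⟨h1, h2⟩
      exact (hP i h1).mp h2
    · intro h1
      exact ⟨by omega, (hP i (by omega)).mpr h1⟩
  rw [h, Finset.card_range]

lemma card_prod_filter' (NN MM t KK : ℕ) (ht : t < NN) (hK : KK ≤ MM) (P : ℕ × ℕ → Prop)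
    [DecidablePred P] (hP : ∀ i x, i < NN → x < MM → (P (i, x) ↔ (i < t ∨ (i = t ∧ x < KK)))) :
    ((Finset.range NN ×ˢ Finset.range MM).filter P).card = t * MM + KK := by
  have hsplit : (Finset.range NN ×ˢ Finset.range MM).filter P
      = (Finset.range t ×ˢ Finset.range MM) ∪ ({t} ×ˢ Finset.range KK) := by
    ext ⟨i, x⟩
    simp only [Finset.mem_filter, Finset.mem_product, Finset.mem_range, Finset.mem_union,
      Finset.mem_singleton]
    constructor
    · rintro ⟨⟨hi, hx⟩, hPix⟩
      rcases (hP i x hi hx).mp hPix with h | ⟨rfl, h⟩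
      · exact Or.inl ⟨h, hx⟩
      · exact Or.inr ⟨rfl, h⟩
    · rintro (⟨hi, hx⟩ | ⟨rfl, hx⟩)
      · exact ⟨⟨lt_trans hi ht, hx⟩, (hP i x (lt_trans hi ht) hx).mpr (Or.inl hi)⟩
      · exact ⟨⟨ht, by omega⟩, (hP i x ht (by omega)).mpr (Or.inr ⟨rfl, hx⟩)⟩
  have hdisj : Disjoint (Finset.range t ×ˢ Finset.range MM) ({t} ×ˢ Finset.range KK) := by
    refine Finset.disjoint_left.mpr ?_
    rintro ⟨i, x⟩ h1 h2
    simp only [Finset.mem_product, Finset.mem_range, Finset.mem_singleton] at h1 h2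
    omega
  rw [hsplit, Finset.card_union_of_disjoint hdisj, Finset.card_product, Finset.card_product,
    Finset.card_range, Finset.card_range, Finset.card_range, Finset.card_singleton, one_mul]

lemma card_fin_filter' (NN KK : ℕ) (hK : KK ≤ NN) (P : Fin NN → Prop) [DecidablePred P]
    (hP : ∀ i : Fin NN, P i ↔ i.val < KK) :
    ((Finset.univ : Finset (Fin NN)).filter P).card = KK := by
  rw [← Finset.card_range KK]
  apply Finset.card_bij (fun i _ => i.val)
  · intro i hi
    simp only [Finset.mem_range]
    exact (hP i).mp (Finset.mem_filter.mp hi).2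
  · intro i _ j _ h
    exact Fin.ext h
  · intro k hk
    simp only [Finset.mem_range] at hk
    exact ⟨⟨k, by omega⟩, Finset.mem_filter.mpr ⟨Finset.mem_univ _, (hP _).mpr hk⟩, rfl⟩

lemma card_fin_prod_filter' (NN MM t KK : ℕ) (ht : t < NN) (hK : KK ≤ MM)
    (P : Fin NN × Fin MM → Prop) [DecidablePred P]
    (hP : ∀ q : Fin NN × Fin MM, P q ↔ (q.1.val < t ∨ (q.1.val = t ∧ q.2.val < KK))) :
    ((Finset.univ : Finset (Fin NN × Fin MM)).filter P).card = t * MM + KK := by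
  rw [← card_prod_filter' NN MM t KK ht hK
    (fun q => q.1 < t ∨ (q.1 = t ∧ q.2 < KK)) (fun i x hi hx => Iff.rfl)]
  apply Finset.card_bij (fun q _ => (q.1.val, q.2.val))
  · intro q hq
    simp only [Finset.mem_filter, Finset.mem_product, Finset.mem_range]
    exact ⟨⟨q.1.isLt, q.2.isLt⟩, (hP q).mp (Finset.mem_filter.mp hq).2⟩
  · intro q _ r _ h
    have h1 : q.1.val = r.1.val := congrArg Prod.fst h
    have h2 : q.2.val = r.2.val := congrArg Prod.snd h
    exact Prod.ext (Fin.ext h1) (Fin.ext h2)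
  · rintro ⟨i, x⟩ hk
    simp only [Finset.mem_filter, Finset.mem_product, Finset.mem_range] at hk
    exact ⟨(⟨i, hk.1.1⟩, ⟨x, hk.1.2⟩), Finset.mem_filter.mpr ⟨Finset.mem_univ _,
      (hP _).mpr hk.2⟩, rfl⟩

lemma cycleGraph_adj_iff {m : ℕ} (x y : Fin (m+3)) :
    (cycleGraph (m+3)).Adj x y ↔
      (x.val + 1 = y.val ∨ y.val + 1 = x.val ∨ (x.val = m+2 ∧ y.val = 0)
        ∨ (y.val = m+2 ∧ x.val = 0)) := by
  rw [cycleGraph_adj']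
  have key : ∀ u v : Fin (m+3), (u - v).val = (if v.val ≤ u.val then u.val - v.val
      else u.val + (m+3) - v.val) := by
    intro u v
    rw [Fin.sub_def]
    simp only
    rcases le_or_gt v.val u.val with h | h
    · rw [if_pos h]
      have hu := u.isLt
      have hv := v.isLt
      have h1 : (m + 3 - v.val) + u.val = (m+3) + (u.val - v.val) := by omega
      rw [h1, Nat.add_mod_left, Nat.mod_eq_of_lt (by omega)]
    · rw [if_neg (by omega)]
      have hu := u.isLt
      have hv := v.isLt
      have h1 : (m + 3 - v.val) + u.val = u.val + (m+3) - v.val := by omega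
      rw [h1, Nat.mod_eq_of_lt (by omega)]
  rw [key, key]
  have hx := x.isLt
  have hy := y.isLt
  rcases le_or_gt y.val x.val with h | h <;> rcases le_or_gt x.val y.val with h' | h' <;>
    simp only [if_pos, if_neg, h, h', not_le] <;> omega

end Generic


section Concrete

variable (n m p t a b : ℕ)

abbrev VV (n m : ℕ) := Fin (n+1) ⊕ Fin (n+1) × Fin (m+3)

/-- the symmetric 0/1 edge-labeling function on pairs of vertices -/
def gfun : VV n m → VV n m → ℕ
  | inl i, inl j => if min i.val j.val < p then 0 else 1
  | inl _, inr (j, x) => if j.val < t ∨ (j.val = t ∧ x.val < a) then 0 else 1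
  | inr (j, x), inl _ => if j.val < t ∨ (j.val = t ∧ x.val < a) then 0 else 1
  | inr (i, x), inr (j, y) =>
      if (i.val < t ∧ j.val < t) ∨ (i.val = t ∧ j.val = t ∧
          ((x.val + 1 = y.val ∧ x.val < b) ∨ (y.val + 1 = x.val ∧ y.val < b) ∨
           (x.val = m + 2 ∧ y.val = 0 ∧ m + 2 < b) ∨ (y.val = m + 2 ∧ x.val = 0 ∧ m + 2 < b)))
      then 0 else 1

lemma gfun_symm : ∀ u v, gfun n m p t a b u v = gfun n m p t a b v u := by
  rintro (i | ⟨i, x⟩) (j | ⟨j, y⟩) <;> simp only [gfun] <;>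
    refine if_congr (by constructor <;> intro h <;> omega) rfl rfl

noncomputable def flab : Sym2 (VV n m) → ℕ :=
  Sym2.lift ⟨gfun n m p t a b, gfun_symm n m p t a b⟩

lemma flab_mk (u v : VV n m) : flab n m p t a b s(u, v) = gfun n m p t a b u v :=
  Sym2.lift_mk _ _ _

lemma flab_01 : ∀ e, flab n m p t a b e = 0 ∨ flab n m p t a b e = 1 := by
  intro e
  induction e using Sym2.ind with
  | _ u v =>
    rw [flab_mk]
    rcases u with i | ⟨i, x⟩ <;> rcases v with j | ⟨j, y⟩ <;>
      simp only [gfun] <;> split_ifs <;> simp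

/-- path vertex -/
def pv (k : ℕ) : VV n m := inl ⟨min k n, by omega⟩

/-- cycle vertex -/
def cvx (i x : ℕ) : VV n m := inr (⟨min i n, by omega⟩, ⟨min x (m+2), by omega⟩)

def pe (k : ℕ) : Sym2 (VV n m) := s(pv n m k, pv n m (k+1))

def spk (i x : ℕ) : Sym2 (VV n m) := s(pv n m i, cvx n m i x)

def cnext (x : ℕ) : ℕ := if x = m + 2 then 0 else x + 1

def ce (i k : ℕ) : Sym2 (VV n m) := s(cvx n m i k, cvx n m i (cnext m k))

def PE : Finset (Sym2 (VV n m)) := (Finset.range n).image (pe n m)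
def SP : Finset (Sym2 (VV n m)) :=
  (Finset.range (n+1) ×ˢ Finset.range (m+3)).image fun q => spk n m q.1 q.2
def CE : Finset (Sym2 (VV n m)) :=
  (Finset.range (n+1) ×ˢ Finset.range (m+3)).image fun q => ce n m q.1 q.2

abbrev Gr (n m : ℕ) : SimpleGraph (VV n m) := corona (pathGraph (n+1)) (cycleGraph (m+3))

lemma adj_pe {k : ℕ} (hk : k < n) : (Gr n m).Adj (pv n m k) (pv n m (k+1)) := by
  rw [pv, pv, corona_adj_inl_inl, pathGraph_adj]
  simp only
  omega

lemma adj_spk {i x : ℕ} : (Gr n m).Adj (pv n m i) (cvx n m i x) := by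
  rw [pv, cvx, corona_adj_inl_inr]

lemma adj_ce {i k : ℕ} (hk : k < m + 3) :
    (Gr n m).Adj (cvx n m i k) (cvx n m i (cnext m k)) := by
  rw [cvx, cvx, corona_adj_inr_inr]
  refine ⟨rfl, ?_⟩
  rw [cycleGraph_adj_iff]
  simp only
  by_cases h : k = m + 2
  · rw [cnext, if_pos h]; omega
  · rw [cnext, if_neg h]; omega

lemma edge_decomp :
    (Gr n m).edgeFinset = PE n m ∪ SP n m ∪ CE n m := by
  ext e
  induction e using Sym2.ind with
  | _ u v =>
    rw [mem_edgeFinset, mem_edgeSet]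
    constructor
    · intro hadj
      simp only [Finset.mem_union, PE, SP, CE, Finset.mem_image, Finset.mem_product,
        Finset.mem_range]
      rcases u with i | ⟨i, x⟩ <;> rcases v with j | ⟨j, y⟩
      · rw [corona_adj_inl_inl, pathGraph_adj] at hadj
        have hi := i.isLt
        have hj := j.isLt
        left; left
        rcases hadj with h | h
        · exact ⟨i.val, by omega, by simp [pe, pv, Sym2.eq_iff, Fin.ext_iff]; omega⟩
        · exact ⟨j.val, by omega, by simp [pe, pv, Sym2.eq_iff, Fin.ext_iff]; omega⟩
      · rw [corona_adj_inl_inr] at hadj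
        subst hadj
        have hi := i.isLt
        have hy := y.isLt
        left; right
        exact ⟨(i.val, y.val), ⟨i.isLt, y.isLt⟩,
          by simp [spk, pv, cvx, Sym2.eq_iff, Fin.ext_iff, Prod.ext_iff]; omega⟩
      · rw [corona_adj_inr_inl] at hadj
        subst hadj
        have hj := j.isLt
        have hx := x.isLt
        left; right
        exact ⟨(j.val, x.val), ⟨j.isLt, x.isLt⟩,
          by simp [spk, pv, cvx, Sym2.eq_iff, Fin.ext_iff, Prod.ext_iff]; omega⟩
      · rw [corona_adj_inr_inr] at hadj
        obtain ⟨rfl, hcyc⟩ := hadj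
        rw [cycleGraph_adj_iff] at hcyc
        right
        have hi := i.isLt
        have hx := x.isLt
        have hy := y.isLt
        rcases hcyc with h | h | h | h
        · have hx2 : x.val ≠ m + 2 := by omega
          exact ⟨(i.val, x.val), ⟨i.isLt, x.isLt⟩,
            by simp [ce, cvx, cnext, hx2, Sym2.eq_iff, Fin.ext_iff, Prod.ext_iff]; omega⟩
        · have hy2 : y.val ≠ m + 2 := by omega
          exact ⟨(i.val, y.val), ⟨i.isLt, y.isLt⟩,
            by simp [ce, cvx, cnext, hy2, Sym2.eq_iff, Fin.ext_iff, Prod.ext_iff]; omega⟩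
        · exact ⟨(i.val, m+2), ⟨i.isLt, by omega⟩,
            by simp [ce, cvx, cnext, Sym2.eq_iff, Fin.ext_iff, Prod.ext_iff]; omega⟩
        · exact ⟨(i.val, m+2), ⟨i.isLt, by omega⟩,
            by simp [ce, cvx, cnext, Sym2.eq_iff, Fin.ext_iff, Prod.ext_iff]; omega⟩
    · intro hmem
      simp only [Finset.mem_union, PE, SP, CE, Finset.mem_image, Finset.mem_product,
        Finset.mem_range] at hmem
      rcases hmem with (⟨k, hk, he⟩ | ⟨⟨i, x⟩, ⟨hi, hx⟩, he⟩) | ⟨⟨i, k⟩, ⟨hi, hk⟩, he⟩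
      · exact adj_of_sym2_eq he.symm (adj_pe n m hk)
      · exact adj_of_sym2_eq he.symm (adj_spk n m)
      · exact adj_of_sym2_eq he.symm (adj_ce n m hk)

end Concrete


section Counting

variable (n m p t a b : ℕ)

lemma pe_injOn : Set.InjOn (pe n m) ↑(Finset.range n) := by
  intro k hk l hl h
  simp only [Finset.coe_range, Set.mem_Iio] at hk hl
  simp only [pe, pv, Sym2.eq_iff, Sum.inl.injEq, Fin.mk.injEq] at h
  omega

lemma spk_injOn : Set.InjOn (fun q : ℕ × ℕ => spk n m q.1 q.2)
    ↑(Finset.range (n+1) ×ˢ Finset.range (m+3)) := by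
  rintro ⟨i, x⟩ h ⟨j, y⟩ h' heq
  simp only [Finset.coe_product, Set.mem_prod, Finset.coe_range, Set.mem_Iio] at h h'
  simp only [spk, pv, cvx, Sym2.eq_iff, Sum.inl.injEq, Sum.inr.injEq, Fin.mk.injEq,
    Prod.mk.injEq, reduceCtorEq] at heq
  obtain ⟨h1, h2⟩ := h
  obtain ⟨h3, h4⟩ := h'
  rcases heq with ⟨ha1, ha2, ha3⟩ | ⟨ha1, ha2⟩
  · simp only [Prod.mk.injEq]
    omega
  · exact absurd ha1 (by simp)

lemma ce_injOn : Set.InjOn (fun q : ℕ × ℕ => ce n m q.1 q.2)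
    ↑(Finset.range (n+1) ×ˢ Finset.range (m+3)) := by
  rintro ⟨i, k⟩ h ⟨j, l⟩ h' heq
  simp only [Finset.coe_product, Set.mem_prod, Finset.coe_range, Set.mem_Iio] at h h'
  obtain ⟨h1, h2⟩ := h
  obtain ⟨h3, h4⟩ := h'
  by_cases hk : k = m + 2 <;> by_cases hl : l = m + 2 <;>
    simp only [ce, cvx, cnext, hk, hl, if_pos, if_neg, if_true, if_false,
      Sym2.eq_iff, Sum.inr.injEq, Prod.mk.injEq, Fin.mk.injEq] at heq <;>
    simp only [Prod.mk.injEq] <;> omega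

lemma disj_PE_SP : Disjoint (PE n m) (SP n m) := by
  refine Finset.disjoint_left.mpr ?_
  intro e h1 h2
  simp only [PE, SP, Finset.mem_image] at h1 h2
  obtain ⟨k, _, rfl⟩ := h1
  obtain ⟨q, _, hq⟩ := h2
  simp [pe, spk, pv, cvx, Sym2.eq_iff] at hq

lemma disj_PE_CE : Disjoint (PE n m) (CE n m) := by
  refine Finset.disjoint_left.mpr ?_
  intro e h1 h2
  simp only [PE, CE, Finset.mem_image] at h1 h2
  obtain ⟨k, _, rfl⟩ := h1
  obtain ⟨q, _, hq⟩ := h2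
  simp [pe, ce, pv, cvx, Sym2.eq_iff] at hq

lemma disj_SP_CE : Disjoint (SP n m) (CE n m) := by
  refine Finset.disjoint_left.mpr ?_
  intro e h1 h2
  simp only [SP, CE, Finset.mem_image] at h1 h2
  obtain ⟨q, _, rfl⟩ := h1
  obtain ⟨q', _, hq⟩ := h2
  simp [spk, ce, pv, cvx, Sym2.eq_iff] at hq

lemma card_E : (Gr n m).edgeFinset.card = n + ((n+1)*(m+3) + (n+1)*(m+3)) := by
  rw [edge_decomp,
    Finset.card_union_of_disjoint
      (Finset.disjoint_union_left.mpr ⟨disj_PE_CE n m, disj_SP_CE n m⟩),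
    Finset.card_union_of_disjoint (disj_PE_SP n m),
    PE, SP, CE,
    Finset.card_image_of_injOn (pe_injOn n m),
    Finset.card_image_of_injOn (spk_injOn n m),
    Finset.card_image_of_injOn (ce_injOn n m),
    Finset.card_range, Finset.card_product, Finset.card_range, Finset.card_range]
  ring

lemma flab_pe_iff {k : ℕ} (hk : k < n) :
    (flab n m p t a b (pe n m k) = 0) ↔ k < p := by
  rw [pe, pv, pv, flab_mk]
  simp only [gfun]
  rw [ite01_eq_zero_iff]
  omega

lemma flab_spk_iff {i x : ℕ} (hi : i < n + 1) (hx : x < m + 3) :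
    (flab n m p t a b (spk n m i x) = 0) ↔ (i < t ∨ (i = t ∧ x < a)) := by
  rw [spk, pv, cvx, flab_mk]
  simp only [gfun]
  rw [ite01_eq_zero_iff]
  omega

lemma flab_ce_iff {i k : ℕ} (hi : i < n + 1) (hk : k < m + 3) (hb : b ≤ m + 3) :
    (flab n m p t a b (ce n m i k) = 0) ↔ (i < t ∨ (i = t ∧ k < b)) := by
  rw [ce, cvx, cvx, flab_mk]
  simp only [gfun]
  rw [ite01_eq_zero_iff]
  by_cases h : k = m + 2
  · simp only [cnext, if_pos h]
    omega
  · simp only [cnext, if_neg h]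
    omega

lemma e0_count (ht : t < n + 1) (ha : a ≤ m + 3) (hb : b ≤ m + 3) (hpn : p ≤ n) :
    eCount (Gr n m) (flab n m p t a b) 0
      = p + (t * (m+3) + a) + (t * (m+3) + b) := by
  unfold eCount
  rw [edge_decomp, Finset.filter_union, Finset.filter_union,
    Finset.card_union_of_disjoint (Finset.disjoint_union_left.mpr
      ⟨Finset.disjoint_filter_filter (disj_PE_CE n m),
       Finset.disjoint_filter_filter (disj_SP_CE n m)⟩),
    Finset.card_union_of_disjoint (Finset.disjoint_filter_filter (disj_PE_SP n m))]
  have hPE : ((PE n m).filter (fun e => flab n m p t a b e = 0)).card = p := by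
    rw [PE, Finset.filter_image,
      Finset.card_image_of_injOn ((pe_injOn n m).mono (by
        exact_mod_cast Finset.coe_subset.mpr (Finset.filter_subset _ _)))]
    exact card_range_filter' n p hpn
      (fun k => flab n m p t a b (pe n m k) = 0)
      (fun k hk => flab_pe_iff n m p t a b hk)
  have hSP : ((SP n m).filter (fun e => flab n m p t a b e = 0)).card = t * (m+3) + a := by
    rw [SP, Finset.filter_image,
      Finset.card_image_of_injOn ((spk_injOn n m).mono (by
        exact_mod_cast Finset.coe_subset.mpr (Finset.filter_subset _ _)))]
    exact card_prod_filter' (n+1) (m+3) t a ht ha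
      (fun q => flab n m p t a b (spk n m q.1 q.2) = 0)
      (fun i x hi hx => flab_spk_iff n m p t a b hi hx)
  have hCE : ((CE n m).filter (fun e => flab n m p t a b e = 0)).card = t * (m+3) + b := by
    rw [CE, Finset.filter_image,
      Finset.card_image_of_injOn ((ce_injOn n m).mono (by
        exact_mod_cast Finset.coe_subset.mpr (Finset.filter_subset _ _)))]
    exact card_prod_filter' (n+1) (m+3) t b ht hb
      (fun q => flab n m p t a b (ce n m q.1 q.2) = 0)
      (fun i x hi hx => flab_ce_iff n m p t a b hi hx hb)
  rw [hPE, hSP, hCE]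

end Counting


section Labels

variable (n m p t a b : ℕ)

lemma label_inl_iff (hpt : 1 ≤ p → p < t) (i : Fin (n+1)) :
    (inducedLabel (Gr n m) (flab n m p t a b) (inl i) = 0)
      ↔ (i.val < t ∨ (i.val = t ∧ 1 ≤ a)) := by
  rw [inducedLabel_eq_zero_iff]
  constructor
  · rintro ⟨u, hadj, h0⟩
    rcases u with j | ⟨j, y⟩
    · rw [corona_adj_inl_inl, pathGraph_adj] at hadj
      rw [flab_mk] at h0
      simp only [gfun] at h0
      rw [ite01_eq_zero_iff] at h0
      have hp1 : 1 ≤ p := by omega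
      have := hpt hp1
      left
      omega
    · rw [corona_adj_inl_inr] at hadj
      subst hadj
      rw [flab_mk] at h0
      simp only [gfun] at h0
      rw [ite01_eq_zero_iff] at h0
      omega
  · intro h
    refine ⟨inr (i, ⟨0, by omega⟩), corona_adj_inl_inr.mpr rfl, ?_⟩
    rw [flab_mk]
    simp only [gfun]
    rw [ite01_eq_zero_iff]
    try dsimp only
    try simp only [true_and, and_true]
    omega

lemma label_inr_iff (hb : b ≤ m + 3) (i : Fin (n+1)) (x : Fin (m+3)) :
    (inducedLabel (Gr n m) (flab n m p t a b) (inr (i, x)) = 0)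
      ↔ (i.val < t ∨ (i.val = t ∧ (x.val < a ∨ (1 ≤ b ∧ x.val ≤ b)))) := by
  have hxx := x.isLt
  rw [inducedLabel_eq_zero_iff]
  constructor
  · rintro ⟨u, hadj, h0⟩
    rcases u with j | ⟨j, y⟩
    · rw [corona_adj_inr_inl] at hadj
      subst hadj
      rw [flab_mk] at h0
      simp only [gfun] at h0
      rw [ite01_eq_zero_iff] at h0
      omega
    · rw [corona_adj_inr_inr] at hadj
      obtain ⟨rfl, hcyc⟩ := hadj
      rw [cycleGraph_adj_iff] at hcyc
      rw [flab_mk] at h0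
      simp only [gfun] at h0
      rw [ite01_eq_zero_iff] at h0
      have hyy := y.isLt
      omega
  · intro h
    by_cases hsp : i.val < t ∨ (i.val = t ∧ x.val < a)
    · refine ⟨inl i, corona_adj_inr_inl.mpr rfl, ?_⟩
      rw [flab_mk]
      simp only [gfun]
      rw [ite01_eq_zero_iff]
      omega
    · have hbx : i.val = t ∧ 1 ≤ b ∧ x.val ≤ b := by omega
      by_cases hxb : x.val < b
      · by_cases hx2 : x.val < m + 2
        · refine ⟨inr (i, ⟨x.val + 1, by omega⟩), ?_, ?_⟩
          · rw [corona_adj_inr_inr]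
            refine ⟨rfl, ?_⟩
            rw [cycleGraph_adj_iff]
            try dsimp only
            try simp only [eq_self_iff_true, true_and, and_true, true_or, or_true]
            try trivial
            try omega
          · rw [flab_mk]
            simp only [gfun]
            rw [ite01_eq_zero_iff]
            try dsimp only
            try simp only [true_and, and_true]
            exact Or.inr ⟨hbx.1, hbx.1, Or.inl hxb⟩
        · refine ⟨inr (i, ⟨0, by omega⟩), ?_, ?_⟩
          · rw [corona_adj_inr_inr]
            refine ⟨rfl, ?_⟩
            rw [cycleGraph_adj_iff]
            try dsimp only
            try simp only [eq_self_iff_true, true_and, and_true, true_or, or_true]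
            try trivial
            try omega
          · rw [flab_mk]
            simp only [gfun]
            rw [ite01_eq_zero_iff]
            try dsimp only
            try simp only [eq_self_iff_true, true_and, and_true, true_or, or_true]
            try trivial
            try omega
      · refine ⟨inr (i, ⟨x.val - 1, by omega⟩), ?_, ?_⟩
        · rw [corona_adj_inr_inr]
          refine ⟨rfl, ?_⟩
          rw [cycleGraph_adj_iff]
          try dsimp only
          try simp only [eq_self_iff_true, true_and, and_true, true_or, or_true]
          try trivial
          try omega
        · rw [flab_mk]
          simp only [gfun]
          rw [ite01_eq_zero_iff]
          try dsimp only
          try simp only [eq_self_iff_true, true_and, and_true, true_or, or_true]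
          try trivial
          try omega

lemma v0_count (ht : t < n + 1) (ha : a ≤ m + 3) (hb : b ≤ m + 3)
    (hab : 1 ≤ b → a ≤ b + 1) (hpt : 1 ≤ p → p < t) :
    vCount (Gr n m) (flab n m p t a b) 0
      = (t + (if 1 ≤ a then 1 else 0))
        + (t * (m+3) + (if b = 0 then a else min (b+1) (m+3))) := by
  unfold vCount
  rw [card_filter_sum]
  congr 1
  · apply card_fin_filter' (n+1) (t + (if 1 ≤ a then 1 else 0)) (by split_ifs <;> omega)
    intro i
    rw [label_inl_iff n m p t a b hpt]
    split_ifs with h <;> omega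
  · apply card_fin_prod_filter' (n+1) (m+3) t (if b = 0 then a else min (b+1) (m+3)) ht
      (by split_ifs <;> omega)
    rintro ⟨i, x⟩
    dsimp only
    rw [label_inr_iff n m p t a b hb]
    have hxx := x.isLt
    have hcond := hab
    split_ifs with h <;> omega

end Labels


section Arith

lemma realize_w (m w : ℕ) (hw : w = 0 ∨ w = 3 ∨ (5 ≤ w ∧ w ≤ 3*(m+3)+1)) :
    ∃ a c : ℕ, a ≤ m+3 ∧ c ≤ m+3 ∧ (1 ≤ c → a ≤ c+1) ∧
      a + c + (if 1 ≤ a then 1 else 0) + (if c = 0 then a else min (c+1) (m+3)) = w := by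
  rcases hw with rfl | rfl | ⟨h5, hub⟩
  · exact ⟨0, 0, by omega, by omega, by omega, by simp⟩
  · refine ⟨0, 1, by omega, by omega, by omega, ?_⟩
    rw [if_neg (by omega), if_neg (by omega)]
    omega
  · by_cases hodd : w % 2 = 1
    · by_cases hle : w ≤ 2*(m+3) + 1
      · refine ⟨w / 2, 0, by omega, by omega, by omega, ?_⟩
        rw [if_pos (by omega), if_pos rfl]
        omega
      · refine ⟨w - 2*(m+3) - 1, m+3, by omega, le_refl _, by omega, ?_⟩
        rw [if_pos (by omega), if_neg (by omega)]
        omega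
    · by_cases hle : w ≤ 2*(m+3) + 2
      · refine ⟨2, (w - 4)/2, by omega, by omega, by omega, ?_⟩
        rw [if_pos (by omega), if_neg (by omega)]
        omega
      · refine ⟨w - 2*(m+3) - 1, m+3, by omega, le_refl _, by omega, ?_⟩
        rw [if_pos (by omega), if_neg (by omega)]
        omega

lemma exists_params (n m : ℕ) :
    ∃ p t a b : ℕ, t < n + 1 ∧ a ≤ m + 3 ∧ b ≤ m + 3 ∧ (1 ≤ b → a ≤ b + 1) ∧
      (1 ≤ p → p < t) ∧ p ≤ n ∧
      (∀ S : ℕ, S = ((t + (if 1 ≤ a then 1 else 0))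
            + (t * (m+3) + (if b = 0 then a else min (b+1) (m+3))))
          + (p + (t * (m+3) + a) + (t * (m+3) + b)) →
        ((((n+1) + (n+1)*(m+3)) + (n + ((n+1)*(m+3) + (n+1)*(m+3))) ≤ 2*S + 1) ∧
         (2*S ≤ (((n+1) + (n+1)*(m+3)) + (n + ((n+1)*(m+3) + (n+1)*(m+3)))) + 1))) := by
  set q := 3 * (m+3) + 1 with hq
  set T := (n+1) * q + n with hT
  set Z0 := T / 2 with hZ0
  set t0 := Z0 / q with ht0def
  set r := Z0 % q with hrdef
  have hq10 : 10 ≤ q := by omega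
  have hdm : q * t0 + r = Z0 := Nat.div_add_mod Z0 q
  have hrq : r < q := Nat.mod_lt _ (by omega)
  have hZT1 : 2 * Z0 ≤ T := by omega
  have hZT2 : T ≤ 2 * Z0 + 1 := by omega
  have ht0n : t0 < n + 1 := by
    by_contra hc
    push_neg at hc
    have h1 : q * (n+1) ≤ q * t0 := Nat.mul_le_mul (le_refl q) hc
    have h2 : q * (n + 1) = (n+1) * q := Nat.mul_comm q (n+1)
    have h3 : (n+1) * 10 ≤ (n+1) * q := Nat.mul_le_mul (le_refl (n+1)) hq10
    omega
  have conclude : ∀ p' t' a' b' Z' : ℕ,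
      (Z' = p' + q * t' + (a' + b' + (if 1 ≤ a' then 1 else 0)
        + (if b' = 0 then a' else min (b'+1) (m+3)))) →
      (T ≤ 2*Z' + 1) → (2*Z' ≤ T + 1) →
      t' < n+1 → a' ≤ m+3 → b' ≤ m+3 → (1 ≤ b' → a' ≤ b'+1) →
      (1 ≤ p' → p' < t') → p' ≤ n →
      (∃ p t a b : ℕ, t < n + 1 ∧ a ≤ m + 3 ∧ b ≤ m + 3 ∧ (1 ≤ b → a ≤ b + 1) ∧
        (1 ≤ p → p < t) ∧ p ≤ n ∧
        (∀ S : ℕ, S = ((t + (if 1 ≤ a then 1 else 0))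
              + (t * (m+3) + (if b = 0 then a else min (b+1) (m+3))))
            + (p + (t * (m+3) + a) + (t * (m+3) + b)) →
          ((((n+1) + (n+1)*(m+3)) + (n + ((n+1)*(m+3) + (n+1)*(m+3))) ≤ 2*S + 1) ∧
           (2*S ≤ (((n+1) + (n+1)*(m+3)) + (n + ((n+1)*(m+3) + (n+1)*(m+3)))) + 1)))) := by
    intro p' t' a' b' Z' hZeq hb1 hb2 ht' ha' hb' hab' hpt' hpn'
    refine ⟨p', t', a', b', ht', ha', hb', hab', hpt', hpn', ?_⟩
    intro S hS
    have hqe : q * t' = t' * (m+3) + t' * (m+3) + t' * (m+3) + t' := by rw [hq]; ring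
    have hTe : T = ((n+1) + (n+1)*(m+3)) + (n + ((n+1)*(m+3) + (n+1)*(m+3))) := by
      rw [hT, hq]; ring
    constructor <;> omega
  by_cases hgood : r = 0 ∨ r = 3 ∨ 5 ≤ r
  · obtain ⟨a', b', ha', hb', hab', hsum⟩ := realize_w m r (by omega)
    exact conclude 0 t0 a' b' Z0 (by omega) (by omega) (by omega) ht0n ha' hb' hab'
      (by omega) (by omega)
  · by_cases hTodd : T = 2 * Z0 + 1
    · by_cases hr1 : r = 1
      · have ht02 : 2 ≤ t0 := by
          by_contra hc
          push_neg at hc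
          have hn1 : n ≤ 1 := by
            by_contra hn
            push_neg at hn
            have h1 : q * t0 ≤ q * 1 := Nat.mul_le_mul (le_refl q) (by omega)
            have h2 : 3 * q ≤ (n+1) * q := Nat.mul_le_mul (by omega) (le_refl q)
            omega
          interval_cases n <;> interval_cases t0 <;> omega
        exact conclude 1 t0 0 0 Z0 (by rw [if_neg (by omega), if_pos rfl]; omega)
          (by omega) (by omega) ht0n (by omega) (by omega) (by omega) (by omega) (by omega)
      · obtain ⟨a', b', ha', hb', hab', hsum⟩ := realize_w m (r+1) (by omega)
        exact conclude 0 t0 a' b' (Z0+1) (by omega) (by omega) (by omega) ht0n ha' hb' hab'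
          (by omega) (by omega)
    · have hTeven : T = 2 * Z0 := by omega
      have ht05 : r + 1 ≤ t0 := by
        by_contra hc
        push_neg at hc
        have hc4 : t0 ≤ 4 := by omega
        have hn7 : n ≤ 7 := by
          by_contra hn
          push_neg at hn
          have h1 : q * t0 ≤ q * 4 := Nat.mul_le_mul (le_refl q) hc4
          have h2 : 9 * q ≤ (n+1) * q := Nat.mul_le_mul (by omega) (le_refl q)
          omega
        interval_cases n <;> interval_cases t0 <;> omega
      exact conclude r t0 0 0 Z0 (by rw [if_neg (by omega), if_pos rfl]; omega)
        (by omega) (by omega) ht0n (by omega) (by omega) (by omega) (by omega) (by omega)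

end Arith

lemma card_V (n m : ℕ) : Fintype.card (VV n m) = (n+1) + (n+1)*(m+3) := by
  rw [Fintype.card_sum, Fintype.card_prod, Fintype.card_fin, Fintype.card_fin]

end TotalEPC

/-- For all integers `n ≥ 1` and `m ≥ 3`, the corona graph `P_n ∘ C_m` is
total edge product cordial. -/
theorem corona_path_cycle_isTotalEdgeProductCordial (n m : ℕ) (hn : 1 ≤ n) (hm : 3 ≤ m) :
    IsTotalEdgeProductCordial (corona (pathGraph n) (cycleGraph m)) := by
  obtain ⟨n', rfl⟩ : ∃ k, n = k + 1 := ⟨n - 1, by omega⟩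
  obtain ⟨m', rfl⟩ : ∃ k, m = k + 3 := ⟨m - 3, by omega⟩
  obtain ⟨p, t, a, b, ht, ha, hb, hab, hpt, hpn, hbal⟩ := TotalEPC.exists_params n' m'
  refine ⟨TotalEPC.flab n' m' p t a b, fun e _ => TotalEPC.flab_01 n' m' p t a b e, ?_⟩
  have hv0 := TotalEPC.v0_count n' m' p t a b ht ha hb hab hpt
  have he0 := TotalEPC.e0_count n' m' p t a b ht ha hb hpn
  have hvp := TotalEPC.vCount_partition (TotalEPC.Gr n' m') _ (TotalEPC.flab_01 n' m' p t a b)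
  have hep := TotalEPC.eCount_partition (TotalEPC.Gr n' m') _ (TotalEPC.flab_01 n' m' p t a b)
  rw [TotalEPC.card_E] at hep
  rw [TotalEPC.card_V] at hvp
  obtain ⟨h1, h2⟩ := hbal (vCount (TotalEPC.Gr n' m') (TotalEPC.flab n' m' p t a b) 0
    + eCount (TotalEPC.Gr n' m') (TotalEPC.flab n' m' p t a b) 0) (by rw [hv0, he0])
  simp only [TotalEPC.Gr] at hv0 he0 hvp hep h1 h2
  rw [abs_le]
  constructor <;> omega
end

section
/- Let n be an even positive integer and m ≥ 1 an integer. Then the corona graph P_n ∘ P_m admits an edge labeling f* : E(P_n ∘ P_m) → {0,1} whose induced vertex labeling f satisfies e_f(0) = n·m − 1, e_f(1) = n·m, and v_f(0) = v_f(1) = (n + n·m)/2. In particular |(v_f(0) + e_f(0)) − (v_f(1) + e_f(1))| ≤ 1, so P_n ∘ P_m is total edge product cordial for even n. -/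
open scoped Classical
open Finset SimpleGraph

def fsucc {n : ℕ} (u : Fin n) : Fin n :=
  ⟨(u.val + 1) % n, Nat.mod_lt _ (Nat.lt_of_le_of_lt (Nat.zero_le _) u.isLt)⟩

lemma fsucc_val {n : ℕ} (u : Fin n) (h : u.val + 1 < n) : (fsucc u).val = u.val + 1 :=
  Nat.mod_eq_of_lt h


def vlab (n m k : ℕ) : Fin n ⊕ Fin n × Fin m → ℕ :=
  Sum.elim (fun u => if u.val < k then 1 else 0) (fun p => if p.1.val < k then 1 else 0)

lemma vlab_le_one (n m k : ℕ) (v : Fin n ⊕ Fin n × Fin m) : vlab n m k v ≤ 1 := by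
  rcases v with u | p <;> simp only [vlab, Sum.elim_inl, Sum.elim_inr] <;> split <;> omega

noncomputable def elabF (n m k : ℕ) : Sym2 (Fin n ⊕ Fin n × Fin m) → ℕ :=
  Sym2.lift ⟨fun a b => max (vlab n m k a) (vlab n m k b), fun _ _ => max_comm _ _⟩

lemma elabF_mk (n m k : ℕ) (a b : Fin n ⊕ Fin n × Fin m) :
    elabF n m k s(a, b) = max (vlab n m k a) (vlab n m k b) := rfl

@[simp] lemma corona_adj_inl_inl {α β : Type*} (G : SimpleGraph α) (H : SimpleGraph β)
    (u v : α) : (corona G H).Adj (Sum.inl u) (Sum.inl v) ↔ G.Adj u v := Iff.rfl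

@[simp] lemma corona_adj_inl_inr {α β : Type*} (G : SimpleGraph α) (H : SimpleGraph β)
    (u : α) (p : α × β) : (corona G H).Adj (Sum.inl u) (Sum.inr p) ↔ u = p.1 := Iff.rfl

@[simp] lemma corona_adj_inr_inl {α β : Type*} (G : SimpleGraph α) (H : SimpleGraph β)
    (u : α) (p : α × β) : (corona G H).Adj (Sum.inr p) (Sum.inl u) ↔ u = p.1 := Iff.rfl

@[simp] lemma corona_adj_inr_inr {α β : Type*} (G : SimpleGraph α) (H : SimpleGraph β)
    (p q : α × β) : (corona G H).Adj (Sum.inr p) (Sum.inr q) ↔ p.1 = q.1 ∧ H.Adj p.2 q.2 :=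
  Iff.rfl

lemma inducedLabel_eq (n m k : ℕ) (hm : 0 < m) (v : Fin n ⊕ Fin n × Fin m) :
    inducedLabel (corona (pathGraph n) (pathGraph m)) (elabF n m k) v = vlab n m k v := by
  classical
  unfold inducedLabel
  by_cases hv : vlab n m k v = 1
  · rw [hv]
    apply Finset.prod_eq_one
    intro u _
    rw [elabF_mk, hv]
    have := vlab_le_one n m k u
    omega
  · have hv0 : vlab n m k v = 0 := by have := vlab_le_one n m k v; omega
    rw [hv0]
    rcases v with u | p
    · apply Finset.prod_eq_zero (i := Sum.inr (u, ⟨0, hm⟩))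
      · simp
      · rw [elabF_mk]
        have h2 : vlab n m k (Sum.inr (u, (⟨0, hm⟩ : Fin m))) = 0 := by
          simp only [vlab, Sum.elim_inl, Sum.elim_inr] at hv0 ⊢
          exact hv0
        omega
    · apply Finset.prod_eq_zero (i := Sum.inl p.1)
      · simp
      · rw [elabF_mk]
        have h2 : vlab n m k (Sum.inl p.1) = 0 := by
          simp only [vlab, Sum.elim_inl, Sum.elim_inr] at hv0 ⊢
          exact hv0
        omega

lemma filter_disjSum {α β : Type*} (s : Finset α) (t : Finset β) (p : α ⊕ β → Prop)
    [DecidablePred p] :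
    (s.disjSum t).filter p
      = (s.filter (fun a => p (Sum.inl a))).disjSum (t.filter (fun b => p (Sum.inr b))) := by
  ext x
  rcases x with a | b <;> simp

noncomputable def E1 (n m : ℕ) : Finset (Sym2 (Fin n ⊕ Fin n × Fin m)) :=
  ((Finset.univ : Finset (Fin n)).filter (fun u => u.val + 1 < n)).image
    (fun u => s(Sum.inl u, Sum.inl (fsucc u)))

noncomputable def E2 (n m : ℕ) : Finset (Sym2 (Fin n ⊕ Fin n × Fin m)) :=
  (Finset.univ : Finset (Fin n × Fin m)).image (fun p => s(Sum.inl p.1, Sum.inr p))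

noncomputable def E3 (n m : ℕ) : Finset (Sym2 (Fin n ⊕ Fin n × Fin m)) :=
  ((Finset.univ : Finset (Fin n × Fin m)).filter (fun p => p.2.val + 1 < m)).image
    (fun p => s(Sum.inr p, Sum.inr (p.1, fsucc p.2)))

lemma edge_decomp (n m : ℕ) :
    (corona (pathGraph n) (pathGraph m)).edgeFinset = E1 n m ∪ E2 n m ∪ E3 n m := by
  ext e
  induction e using Sym2.ind with
  | _ a b =>
    simp only [mem_edgeFinset, mem_edgeSet, Finset.mem_union, E1, E2, E3, Finset.mem_image,
      Finset.mem_filter, Finset.mem_univ, true_and]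
    rcases a with u | p <;> rcases b with v | q
    · rw [corona_adj_inl_inl, pathGraph_adj]
      constructor
      · rintro (h | h)
        · refine Or.inl (Or.inl ⟨u, by omega, ?_⟩)
          rw [Sym2.eq_iff]
          exact Or.inl ⟨rfl, congrArg Sum.inl (Fin.ext ((fsucc_val u (by omega)).trans h))⟩
        · refine Or.inl (Or.inl ⟨v, by omega, ?_⟩)
          rw [Sym2.eq_iff]
          exact Or.inr ⟨rfl, congrArg Sum.inl (Fin.ext ((fsucc_val v (by omega)).trans h))⟩
      · rintro ((⟨w, hw, he⟩ | ⟨r, he⟩) | ⟨r, hr, he⟩) <;> rw [Sym2.eq_iff] at he <;>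
          rcases he with ⟨h1, h2⟩ | ⟨h1, h2⟩
        · injection h1 with h1; injection h2 with h2; subst h1
          left; rw [← h2, fsucc_val _ hw]
        · injection h1 with h1; injection h2 with h2; subst h1
          right; rw [← h2, fsucc_val _ hw]
        · simp at h1 h2
        · simp at h1 h2
        · simp at h1 h2
        · simp at h1 h2
    · rw [corona_adj_inl_inr]
      constructor
      · rintro rfl
        refine Or.inl (Or.inr ⟨q, ?_⟩)
        rw [Sym2.eq_iff]; exact Or.inl ⟨rfl, rfl⟩
      · rintro ((⟨w, hw, he⟩ | ⟨r, he⟩) | ⟨r, hr, he⟩) <;> rw [Sym2.eq_iff] at he <;>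
          rcases he with ⟨h1, h2⟩ | ⟨h1, h2⟩
        · simp at h1 h2
        · simp at h1 h2
        · injection h1 with h1; injection h2 with h2; subst h2; exact h1.symm ▸ rfl
        · simp at h1 h2
        · simp at h1 h2
        · simp at h1 h2
    · rw [corona_adj_inr_inl]
      constructor
      · rintro rfl
        refine Or.inl (Or.inr ⟨p, ?_⟩)
        rw [Sym2.eq_iff]; exact Or.inr ⟨rfl, rfl⟩
      · rintro ((⟨w, hw, he⟩ | ⟨r, he⟩) | ⟨r, hr, he⟩) <;> rw [Sym2.eq_iff] at he <;>
          rcases he with ⟨h1, h2⟩ | ⟨h1, h2⟩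
        · simp at h1 h2
        · simp at h1 h2
        · simp at h1 h2
        · injection h1 with h1; injection h2 with h2; subst h2; exact h1.symm ▸ rfl
        · simp at h1 h2
        · simp at h1 h2
    · rw [corona_adj_inr_inr, pathGraph_adj]
      constructor
      · rintro ⟨h1, h | h⟩
        · refine Or.inr ⟨p, by omega, ?_⟩
          rw [Sym2.eq_iff]
          exact Or.inl ⟨rfl, congrArg Sum.inr
            (Prod.ext h1 (Fin.ext ((fsucc_val p.2 (by omega)).trans h)))⟩
        · refine Or.inr ⟨q, by omega, ?_⟩
          rw [Sym2.eq_iff]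
          exact Or.inr ⟨rfl, congrArg Sum.inr
            (Prod.ext h1.symm (Fin.ext ((fsucc_val q.2 (by omega)).trans h)))⟩
      · rintro ((⟨w, hw, he⟩ | ⟨r, he⟩) | ⟨r, hr, he⟩) <;> rw [Sym2.eq_iff] at he <;>
          rcases he with ⟨h1, h2⟩ | ⟨h1, h2⟩
        · simp at h1 h2
        · simp at h1 h2
        · simp at h1 h2
        · simp at h1 h2
        · injection h1 with h1; injection h2 with h2; subst h1
          rw [← h2]
          exact ⟨rfl, Or.inl (fsucc_val _ hr).symm⟩
        · injection h1 with h1; injection h2 with h2; subst h1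
          rw [← h2]
          exact ⟨rfl, Or.inr (fsucc_val _ hr).symm⟩

lemma card_filter_fin (n : ℕ) (P : ℕ → Prop) [DecidablePred P] :
    ((Finset.univ : Finset (Fin n)).filter fun u => P u.val).card
      = ((Finset.range n).filter P).card := by
  apply Finset.card_bij (fun u _ => u.val)
  · intro u hu
    simp only [Finset.mem_filter, Finset.mem_univ, true_and] at hu
    simp [u.isLt, hu]
  · intro a ha b hb h
    exact Fin.ext h
  · intro b hb
    simp only [Finset.mem_filter, Finset.mem_range] at hb
    exact ⟨⟨b, hb.1⟩, by simp [hb.2], rfl⟩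

-- === disjointness ===
lemma E1_disj_E2 (n m : ℕ) : Disjoint (E1 n m) (E2 n m) := by
  rw [Finset.disjoint_left]
  rintro e he1 he2
  simp only [E1, E2, Finset.mem_image, Finset.mem_filter, Finset.mem_univ, true_and] at he1 he2
  obtain ⟨w, hw, rfl⟩ := he1
  obtain ⟨r, hr⟩ := he2
  rw [Sym2.eq_iff] at hr
  rcases hr with ⟨h1, h2⟩ | ⟨h1, h2⟩ <;> simp at h1 h2

lemma E1_disj_E3 (n m : ℕ) : Disjoint (E1 n m) (E3 n m) := by
  rw [Finset.disjoint_left]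
  rintro e he1 he2
  simp only [E1, E3, Finset.mem_image, Finset.mem_filter, Finset.mem_univ, true_and] at he1 he2
  obtain ⟨w, hw, rfl⟩ := he1
  obtain ⟨r, hr, hr2⟩ := he2
  rw [Sym2.eq_iff] at hr2
  rcases hr2 with ⟨h1, h2⟩ | ⟨h1, h2⟩ <;> simp at h1 h2

lemma E2_disj_E3 (n m : ℕ) : Disjoint (E2 n m) (E3 n m) := by
  rw [Finset.disjoint_left]
  rintro e he1 he2
  simp only [E2, E3, Finset.mem_image, Finset.mem_filter, Finset.mem_univ, true_and] at he1 he2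
  obtain ⟨w, rfl⟩ := he1
  obtain ⟨r, hr, hr2⟩ := he2
  rw [Sym2.eq_iff] at hr2
  rcases hr2 with ⟨h1, h2⟩ | ⟨h1, h2⟩ <;> simp at h1 h2

-- === injectivity ===
lemma g1_injOn (n m : ℕ) (s : Finset (Fin n)) (hs : ∀ u ∈ s, u.val + 1 < n) :
    Set.InjOn (fun u : Fin n => s(Sum.inl u, (Sum.inl (fsucc u) : Fin n ⊕ Fin n × Fin m))) s := by
  intro a ha b hb h
  simp only [Sym2.eq_iff] at h
  rcases h with ⟨h1, _⟩ | ⟨h1, h2⟩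
  · exact Sum.inl.inj h1
  · injection h1 with h1; injection h2 with h2
    have e1 : a.val = (fsucc b).val := congrArg Fin.val h1
    rw [fsucc_val b (hs b hb)] at e1
    have e2 : (fsucc a).val = b.val := congrArg Fin.val h2
    rw [fsucc_val a (hs a ha)] at e2
    omega

lemma g2_injOn (n m : ℕ) (s : Finset (Fin n × Fin m)) :
    Set.InjOn (fun p : Fin n × Fin m => s(Sum.inl p.1, (Sum.inr p : Fin n ⊕ Fin n × Fin m))) s := by
  intro a ha b hb h
  simp only [Sym2.eq_iff] at h
  rcases h with ⟨_, h2⟩ | ⟨h1, _⟩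
  · exact Sum.inr.inj h2
  · simp at h1

lemma g3_injOn (n m : ℕ) (s : Finset (Fin n × Fin m)) (hs : ∀ p ∈ s, p.2.val + 1 < m) :
    Set.InjOn (fun p : Fin n × Fin m =>
      s((Sum.inr p : Fin n ⊕ Fin n × Fin m), Sum.inr (p.1, fsucc p.2))) s := by
  intro a ha b hb h
  simp only [Sym2.eq_iff] at h
  rcases h with ⟨h1, _⟩ | ⟨h1, h2⟩
  · exact Sum.inr.inj h1
  · injection h1 with h1; injection h2 with h2
    have e1 := congrArg (fun p : Fin n × Fin m => p.2.val) h1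
    have e2 := congrArg (fun p : Fin n × Fin m => p.2.val) h2
    simp only at e1 e2
    rw [fsucc_val b.2 (hs b hb)] at e1
    rw [fsucc_val a.2 (hs a ha)] at e2
    omega

-- === edge label values on generators ===
lemma elabF_g1 (n m k : ℕ) (u : Fin n) (h : u.val + 1 < n) :
    elabF n m k s(Sum.inl u, (Sum.inl (fsucc u) : Fin n ⊕ Fin n × Fin m))
      = if u.val < k then 1 else 0 := by
  rw [elabF_mk]
  simp only [vlab, Sum.elim_inl]
  rw [fsucc_val u h]
  split_ifs <;> omega

lemma elabF_g2 (n m k : ℕ) (p : Fin n × Fin m) :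
    elabF n m k s(Sum.inl p.1, (Sum.inr p : Fin n ⊕ Fin n × Fin m))
      = if p.1.val < k then 1 else 0 := by
  rw [elabF_mk]
  simp only [vlab, Sum.elim_inl, Sum.elim_inr, max_self]

lemma elabF_g3 (n m k : ℕ) (p : Fin n × Fin m) :
    elabF n m k s((Sum.inr p : Fin n ⊕ Fin n × Fin m), Sum.inr (p.1, fsucc p.2))
      = if p.1.val < k then 1 else 0 := by
  rw [elabF_mk]
  simp only [vlab, Sum.elim_inr, max_self]

-- === product filter count ===
lemma card_prod_filter (n m : ℕ) (P : Fin n → Prop) (Q : Fin m → Prop)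
    [DecidablePred P] [DecidablePred Q] :
    ((Finset.univ : Finset (Fin n × Fin m)).filter fun p => P p.1 ∧ Q p.2).card
      = ((Finset.univ : Finset (Fin n)).filter P).card
          * ((Finset.univ : Finset (Fin m)).filter Q).card := by
  rw [← Finset.card_product]
  congr 1
  ext p
  simp only [Finset.mem_filter, Finset.mem_univ, true_and, Finset.mem_product]

/-- For even positive `n` and `m ≥ 1`, the corona graph `P_n ∘ P_m` admits an
edge labeling with `e_f(0) = nm - 1`, `e_f(1) = nm`, `v_f(0) = v_f(1) = (n + nm)/2`;
in particular it is total edge product cordial. -/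
theorem corona_path_path_even_counts (n m : ℕ) (hn : 0 < n) (hne : Even n) (hm : 1 ≤ m) :
    ∃ f : Sym2 (Fin n ⊕ Fin n × Fin m) → ℕ,
      (∀ e ∈ (corona (pathGraph n) (pathGraph m)).edgeSet, f e = 0 ∨ f e = 1) ∧
      eCount (corona (pathGraph n) (pathGraph m)) f 0 = n * m - 1 ∧
      eCount (corona (pathGraph n) (pathGraph m)) f 1 = n * m ∧
      vCount (corona (pathGraph n) (pathGraph m)) f 0 = (n + n * m) / 2 ∧
      vCount (corona (pathGraph n) (pathGraph m)) f 1 = (n + n * m) / 2 ∧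
      |((vCount (corona (pathGraph n) (pathGraph m)) f 0 : ℤ) +
          (eCount (corona (pathGraph n) (pathGraph m)) f 0 : ℤ)) -
        ((vCount (corona (pathGraph n) (pathGraph m)) f 1 : ℤ) +
          (eCount (corona (pathGraph n) (pathGraph m)) f 1 : ℤ))| ≤ 1 := by
  classical
  obtain ⟨k, hk⟩ := hne
  have hk1 : 1 ≤ k := by omega
  obtain ⟨k', rfl⟩ : ∃ k', k = k' + 1 := ⟨k - 1, by omega⟩
  obtain ⟨m', rfl⟩ : ∃ m', m = m' + 1 := ⟨m - 1, by omega⟩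
  subst hk
  set n : ℕ := (k' + 1) + (k' + 1) with hn_def
  set m : ℕ := m' + 1 with hm_def
  set k : ℕ := k' + 1 with hk_def
  set G := corona (pathGraph n) (pathGraph m) with hG
  set f := elabF n m k with hf
  -- basic Fin n counts
  have hA : ((Finset.univ : Finset (Fin n)).filter fun u => u.val < k).card = k := by
    rw [card_filter_fin n (fun x => x < k)]
    have h : (Finset.range n).filter (fun x => x < k) = Finset.range k := by
      ext x
      simp only [Finset.mem_filter, Finset.mem_range]
      omega
    rw [h, Finset.card_range]
  have hB : ((Finset.univ : Finset (Fin n)).filter fun u => ¬ u.val < k).card = k := by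
    rw [card_filter_fin n (fun x => ¬ x < k)]
    have h : (Finset.range n).filter (fun x => ¬ x < k) = Finset.Ico k n := by
      ext x
      simp only [Finset.mem_filter, Finset.mem_range, Finset.mem_Ico]
      omega
    rw [h, Nat.card_Ico]
    omega
  have hQ1 : ((Finset.univ : Finset (Fin m)).filter fun x => x.val + 1 < m).card = m' := by
    rw [card_filter_fin m (fun x => x + 1 < m)]
    have h : (Finset.range m).filter (fun x => x + 1 < m) = Finset.range m' := by
      ext x
      simp only [Finset.mem_filter, Finset.mem_range]
      omega
    rw [h, Finset.card_range]
  have hT : ((Finset.univ : Finset (Fin m)).filter fun _ => True).card = m := by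
    rw [Finset.filter_true_of_mem (fun _ _ => trivial), Finset.card_univ, Fintype.card_fin]
  have hC1 : ((Finset.univ : Finset (Fin n)).filter
      fun u => k ≤ u.val ∧ u.val + 1 < n).card = k' := by
    rw [card_filter_fin n (fun x => k ≤ x ∧ x + 1 < n)]
    have h : (Finset.range n).filter (fun x => k ≤ x ∧ x + 1 < n) = Finset.Ico k (n - 1) := by
      ext x
      simp only [Finset.mem_filter, Finset.mem_range, Finset.mem_Ico]
      omega
    rw [h, Nat.card_Ico]
    omega
  -- vCount
  have hvc : ∀ i, vCount G f i
      = ((Finset.univ : Finset (Fin n)).filter fun u => vlab n m k (Sum.inl u) = i).card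
        + ((Finset.univ : Finset (Fin n × Fin m)).filter
            fun p => vlab n m k (Sum.inr p) = i).card := by
    intro i
    unfold vCount
    have h : (Finset.univ.filter fun v => inducedLabel G f v = i)
        = Finset.univ.filter (fun v => vlab n m k v = i) := by
      apply Finset.filter_congr
      intro v _
      rw [hG, hf, inducedLabel_eq n m k (by omega)]
    rw [h, ← Finset.univ_disjSum_univ, filter_disjSum, Finset.card_disjSum]
  have hv1 : vCount G f 1 = k + k * m := by
    rw [hvc 1]
    have h1 : ((Finset.univ : Finset (Fin n)).filter fun u => vlab n m k (Sum.inl u) = 1)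
        = Finset.univ.filter fun u => u.val < k := by
      apply Finset.filter_congr
      intro u _
      simp only [vlab, Sum.elim_inl]
      split_ifs with h <;> simp [h]
    have h2 : ((Finset.univ : Finset (Fin n × Fin m)).filter
          fun p => vlab n m k (Sum.inr p) = 1)
        = Finset.univ.filter fun p : Fin n × Fin m => p.1.val < k ∧ True := by
      apply Finset.filter_congr
      intro p _
      simp only [vlab, Sum.elim_inr]
      split_ifs with h <;> simp [h]
    rw [h1, h2, hA, card_prod_filter n m (fun u => u.val < k) (fun _ => True), hA, hT]
  have hv0 : vCount G f 0 = k + k * m := by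
    rw [hvc 0]
    have h1 : ((Finset.univ : Finset (Fin n)).filter fun u => vlab n m k (Sum.inl u) = 0)
        = Finset.univ.filter fun u => ¬ u.val < k := by
      apply Finset.filter_congr
      intro u _
      simp only [vlab, Sum.elim_inl]
      split_ifs with h <;> simp [h]
    have h2 : ((Finset.univ : Finset (Fin n × Fin m)).filter
          fun p => vlab n m k (Sum.inr p) = 0)
        = Finset.univ.filter fun p : Fin n × Fin m => (¬ p.1.val < k) ∧ True := by
      apply Finset.filter_congr
      intro p _
      simp only [vlab, Sum.elim_inr]
      split_ifs with h <;> simp [h]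
    rw [h1, h2, hB, card_prod_filter n m (fun u => ¬ u.val < k) (fun _ => True), hB, hT]
  -- eCount
  have hec : ∀ i, eCount G f i
      = ((Finset.univ : Finset (Fin n)).filter
          (fun u => u.val + 1 < n ∧
            f s(Sum.inl u, (Sum.inl (fsucc u) : Fin n ⊕ Fin n × Fin m)) = i)).card
        + ((Finset.univ : Finset (Fin n × Fin m)).filter
            (fun p => f s(Sum.inl p.1, (Sum.inr p : Fin n ⊕ Fin n × Fin m)) = i)).card
        + ((Finset.univ : Finset (Fin n × Fin m)).filter
            (fun p => p.2.val + 1 < m ∧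
              f s((Sum.inr p : Fin n ⊕ Fin n × Fin m), Sum.inr (p.1, fsucc p.2)) = i)).card := by
    intro i
    unfold eCount
    rw [hG, edge_decomp, Finset.filter_union, Finset.filter_union,
      Finset.card_union_of_disjoint (Finset.disjoint_union_left.mpr
        ⟨Finset.disjoint_filter_filter (E1_disj_E3 n m),
          Finset.disjoint_filter_filter (E2_disj_E3 n m)⟩),
      Finset.card_union_of_disjoint (Finset.disjoint_filter_filter (E1_disj_E2 n m))]
    congr 1
    · congr 1
      · rw [E1, Finset.filter_image,
          Finset.card_image_of_injOn (g1_injOn n m _ (fun u hu => by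
            simp only [Finset.mem_filter, Finset.mem_univ, true_and] at hu
            exact hu.1)),
          Finset.filter_filter]
      · rw [E2, Finset.filter_image, Finset.card_image_of_injOn (g2_injOn n m _)]
    · rw [E3, Finset.filter_image,
        Finset.card_image_of_injOn (g3_injOn n m _ (fun p hp => by
          simp only [Finset.mem_filter, Finset.mem_univ, true_and] at hp
          exact hp.1)),
        Finset.filter_filter]
  have he1 : eCount G f 1 = n * m := by
    rw [hec 1]
    have t1 : ((Finset.univ : Finset (Fin n)).filter
        (fun u => u.val + 1 < n ∧
          f s(Sum.inl u, (Sum.inl (fsucc u) : Fin n ⊕ Fin n × Fin m)) = 1))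
        = Finset.univ.filter fun u => u.val < k := by
      ext u
      simp only [Finset.mem_filter, Finset.mem_univ, true_and]
      constructor
      · rintro ⟨h1, h2⟩
        rw [hf, elabF_g1 n m k u h1] at h2
        by_contra hlt
        rw [if_neg hlt] at h2
        omega
      · intro h
        have h1 : u.val + 1 < n := by omega
        exact ⟨h1, by rw [hf, elabF_g1 n m k u h1, if_pos h]⟩
    have t2 : ((Finset.univ : Finset (Fin n × Fin m)).filter
        (fun p => f s(Sum.inl p.1, (Sum.inr p : Fin n ⊕ Fin n × Fin m)) = 1))
        = Finset.univ.filter fun p : Fin n × Fin m => p.1.val < k ∧ True := by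
      apply Finset.filter_congr
      intro p _
      rw [hf, elabF_g2 n m k p]
      split_ifs with h <;> simp [h]
    have t3 : ((Finset.univ : Finset (Fin n × Fin m)).filter
        (fun p => p.2.val + 1 < m ∧
          f s((Sum.inr p : Fin n ⊕ Fin n × Fin m), Sum.inr (p.1, fsucc p.2)) = 1))
        = Finset.univ.filter fun p : Fin n × Fin m => p.1.val < k ∧ p.2.val + 1 < m := by
      apply Finset.filter_congr
      intro p _
      rw [hf, elabF_g3 n m k p]
      split_ifs with h <;> simp [h]
    rw [t1, t2, t3, hA, card_prod_filter n m (fun u => u.val < k) (fun _ => True), hA, hT,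
      card_prod_filter n m (fun u => u.val < k) (fun x => x.val + 1 < m), hA, hQ1]
    show k + k * m + k * m' = n * m
    rw [hn_def, hm_def, hk_def]
    ring
  have he0 : eCount G f 0 = n * m - 1 := by
    rw [hec 0]
    have t1 : ((Finset.univ : Finset (Fin n)).filter
        (fun u => u.val + 1 < n ∧
          f s(Sum.inl u, (Sum.inl (fsucc u) : Fin n ⊕ Fin n × Fin m)) = 0))
        = Finset.univ.filter fun u => k ≤ u.val ∧ u.val + 1 < n := by
      ext u
      simp only [Finset.mem_filter, Finset.mem_univ, true_and]
      constructor
      · rintro ⟨h1, h2⟩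
        rw [hf, elabF_g1 n m k u h1] at h2
        refine ⟨?_, h1⟩
        by_contra hlt
        rw [if_pos (by omega)] at h2
        omega
      · rintro ⟨h, h1⟩
        exact ⟨h1, by rw [hf, elabF_g1 n m k u h1, if_neg (by omega)]⟩
    have t2 : ((Finset.univ : Finset (Fin n × Fin m)).filter
        (fun p => f s(Sum.inl p.1, (Sum.inr p : Fin n ⊕ Fin n × Fin m)) = 0))
        = Finset.univ.filter fun p : Fin n × Fin m => (¬ p.1.val < k) ∧ True := by
      apply Finset.filter_congr
      intro p _
      rw [hf, elabF_g2 n m k p]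
      split_ifs with h <;> simp [h]
    have t3 : ((Finset.univ : Finset (Fin n × Fin m)).filter
        (fun p => p.2.val + 1 < m ∧
          f s((Sum.inr p : Fin n ⊕ Fin n × Fin m), Sum.inr (p.1, fsucc p.2)) = 0))
        = Finset.univ.filter fun p : Fin n × Fin m => (¬ p.1.val < k) ∧ p.2.val + 1 < m := by
      apply Finset.filter_congr
      intro p _
      rw [hf, elabF_g3 n m k p]
      split_ifs with h <;> simp [h]
    rw [t1, t2, t3, hC1, card_prod_filter n m (fun u => ¬ u.val < k) (fun _ => True), hB, hT,
      card_prod_filter n m (fun u => ¬ u.val < k) (fun x => x.val + 1 < m), hB, hQ1]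
    show k' + k * m + k * m' = n * m - 1
    refine Nat.eq_sub_of_add_eq ?_
    rw [hn_def, hm_def, hk_def]
    ring
  have hhalf : k + k * m = (n + n * m) / 2 := by
    have h : n + n * m = (k + k * m) * 2 := by
      rw [hn_def, hm_def, hk_def]; ring
    rw [h, Nat.mul_div_cancel]
    omega
  have hnm1 : 1 ≤ n * m := by
    have := Nat.mul_pos (show 0 < n by omega) (show 0 < m by omega)
    omega
  refine ⟨f, ?_, he0, he1, hv0.trans hhalf, hv1.trans hhalf, ?_⟩
  · intro e _
    induction e using Sym2.ind with
    | _ a b =>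
      rw [hf, elabF_mk]
      have ha := vlab_le_one n m k a
      have hb := vlab_le_one n m k b
      have : max (vlab n m k a) (vlab n m k b) ≤ 1 := max_le ha hb
      omega
  · rw [hv0, hv1, he0, he1, Nat.cast_sub hnm1]
    push_cast
    rw [abs_le]
    constructor <;> linarith
end

section
/- Let n ≥ 3 be an odd integer and m ≥ 1 an odd integer. Then the corona graph P_n ∘ P_m admits an edge labeling f* : E(P_n ∘ P_m) → {0,1} whose induced vertex labeling f satisfies e_f(0) = n·m − 1, e_f(1) = n·m, v_f(0) = (n·m + n + 2)/2, and v_f(1) = (n + n·m − 2)/2. In particular |(v_f(0) + e_f(0)) − (v_f(1) + e_f(1))| ≤ 1, so P_n ∘ P_m is total edge product cordial for odd n ≥ 3 and odd m. -/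
open scoped Classical
open Finset SimpleGraph

def finSucc2 {k : ℕ} (x : Fin k) : Fin k :=
  if h : x.val + 1 < k then ⟨x.val + 1, h⟩ else x

lemma finSucc2_val {k : ℕ} (x : Fin k) (h : x.val + 1 < k) : (finSucc2 x).val = x.val + 1 := by
  simp [finSucc2, h]

def bEdge {n m : ℕ} (j : Fin n) : Sym2 (Fin n ⊕ Fin n × Fin m) :=
  s(Sum.inl j, Sum.inl (finSucc2 j))

def iEdge {n m : ℕ} (q : Fin n × Fin m) : Sym2 (Fin n ⊕ Fin n × Fin m) :=
  s(Sum.inr q, Sum.inr (q.1, finSucc2 q.2))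

def sEdge {n m : ℕ} (q : Fin n × Fin m) : Sym2 (Fin n ⊕ Fin n × Fin m) :=
  s(Sum.inl q.1, Sum.inr q)

lemma corona_adj_iff {α β : Type*} (G : SimpleGraph α) (H : SimpleGraph β) (u v) :
    (corona G H).Adj u v ↔ coronaAdj G H u v := Iff.rfl

lemma corona_filter_card (n m : ℕ) [Fintype ((corona (pathGraph n) (pathGraph m)).edgeSet)]
    (p : Sym2 (Fin n ⊕ Fin n × Fin m) → Prop) [DecidablePred p] :
    ((corona (pathGraph n) (pathGraph m)).edgeFinset.filter p).card
      = ((univ : Finset (Fin n)).filter fun j => j.val + 1 < n ∧ p (bEdge j)).card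
      + ((univ : Finset (Fin n × Fin m)).filter fun q => q.2.val + 1 < m ∧ p (iEdge q)).card
      + ((univ : Finset (Fin n × Fin m)).filter fun q => p (sEdge q)).card := by
  classical
  have himg : (corona (pathGraph n) (pathGraph m)).edgeFinset.filter p
      = ((((univ : Finset (Fin n)).filter fun j => j.val + 1 < n ∧ p (bEdge j)).image bEdge
          ∪ (((univ : Finset (Fin n × Fin m)).filter fun q => q.2.val + 1 < m ∧ p (iEdge q)).image iEdge))
          ∪ (((univ : Finset (Fin n × Fin m)).filter fun q => p (sEdge q)).image sEdge)) := by
    ext e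
    induction e using Sym2.ind with
    | _ u v =>
      simp only [mem_filter, SimpleGraph.mem_edgeFinset, mem_union, mem_image, mem_univ,
        true_and]
      constructor
      · rintro ⟨hadj, hp⟩
        rw [SimpleGraph.mem_edgeSet] at hadj
        have hadj' : coronaAdj (pathGraph n) (pathGraph m) u v := hadj
        rcases u with j | q <;> rcases v with k | r
        · simp only [coronaAdj, pathGraph_adj] at hadj'
          rcases hadj' with h | h
          · have hlt : j.val + 1 < n := h ▸ k.isLt
            have hk : finSucc2 j = k := Fin.ext (by rw [finSucc2_val _ hlt]; exact h)
            have hbe : bEdge (m := m) j = s(Sum.inl j, Sum.inl k) := by rw [bEdge, hk]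
            exact Or.inl (Or.inl ⟨j, ⟨hlt, hbe ▸ hp⟩, hbe⟩)
          · have hlt : k.val + 1 < n := h ▸ j.isLt
            have hj : finSucc2 k = j := Fin.ext (by rw [finSucc2_val _ hlt]; exact h)
            have hbe : bEdge (m := m) k = s(Sum.inl j, Sum.inl k) := by
              rw [bEdge, hj, Sym2.eq_swap]
            exact Or.inl (Or.inl ⟨k, ⟨hlt, hbe ▸ hp⟩, hbe⟩)
        · simp only [coronaAdj] at hadj'
          have hbe : sEdge r = s(Sum.inl j, Sum.inr r) := by rw [sEdge, hadj']
          exact Or.inr ⟨r, hbe ▸ hp, hbe⟩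
        · simp only [coronaAdj] at hadj'
          have hbe : sEdge q = s(Sum.inr q, Sum.inl k) := by
            rw [sEdge, Sym2.eq_swap]
            obtain ⟨q1, q2⟩ := q
            simp only at hadj'
            rw [hadj']
          exact Or.inr ⟨q, hbe ▸ hp, hbe⟩
        · obtain ⟨q1, q2⟩ := q
          obtain ⟨r1, r2⟩ := r
          simp only [coronaAdj, pathGraph_adj] at hadj'
          obtain ⟨h1, h2⟩ := hadj'
          subst h1
          rcases h2 with h | h
          · have hlt : q2.val + 1 < m := h ▸ r2.isLt
            have hk : finSucc2 q2 = r2 := Fin.ext (by rw [finSucc2_val _ hlt]; exact h)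
            have hbe : iEdge (q1, q2) = s(Sum.inr (q1, q2), Sum.inr (q1, r2)) := by
              rw [iEdge, hk]
            exact Or.inl (Or.inr ⟨(q1, q2), ⟨hlt, hbe ▸ hp⟩, hbe⟩)
          · have hlt : r2.val + 1 < m := h ▸ q2.isLt
            have hk : finSucc2 r2 = q2 := Fin.ext (by rw [finSucc2_val _ hlt]; exact h)
            have hbe : iEdge (q1, r2) = s(Sum.inr (q1, q2), Sum.inr (q1, r2)) := by
              rw [iEdge, hk, Sym2.eq_swap]
            exact Or.inl (Or.inr ⟨(q1, r2), ⟨hlt, hbe ▸ hp⟩, hbe⟩)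
      · rintro ((⟨j, ⟨hlt, hp⟩, he⟩ | ⟨q, ⟨hlt, hp⟩, he⟩) | ⟨q, hp, he⟩)
        · refine ⟨?_, he ▸ hp⟩
          rw [← he, bEdge, SimpleGraph.mem_edgeSet, corona_adj_iff]
          simp only [coronaAdj, pathGraph_adj]
          exact Or.inl (by rw [finSucc2_val _ hlt])
        · refine ⟨?_, he ▸ hp⟩
          rw [← he, iEdge, SimpleGraph.mem_edgeSet, corona_adj_iff]
          obtain ⟨q1, q2⟩ := q
          simp only [coronaAdj, pathGraph_adj]
          exact ⟨trivial, Or.inl (by rw [finSucc2_val _ hlt])⟩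
        · refine ⟨?_, he ▸ hp⟩
          rw [← he, sEdge, SimpleGraph.mem_edgeSet, corona_adj_iff]
          obtain ⟨q1, q2⟩ := q
          simp only [coronaAdj]
  have hinj1 : Set.InjOn (bEdge (m := m))
      (↑((univ : Finset (Fin n)).filter fun j => j.val + 1 < n ∧ p (bEdge j)) : Set (Fin n)) := by
    intro j hj j' hj' h
    simp only [coe_filter, Set.mem_setOf_eq, mem_univ, true_and] at hj hj'
    rw [bEdge, bEdge, Sym2.eq_iff] at h
    rcases h with ⟨h1, _⟩ | ⟨h1, h2⟩
    · exact Sum.inl.inj h1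
    · have e1 := congrArg Fin.val (Sum.inl.inj h1)
      have e2 := congrArg Fin.val (Sum.inl.inj h2)
      rw [finSucc2_val _ hj'.1] at e1
      rw [finSucc2_val _ hj.1] at e2
      exact Fin.ext (by omega)
  have hinj2 : Set.InjOn (iEdge (n := n) (m := m))
      (↑((univ : Finset (Fin n × Fin m)).filter fun q => q.2.val + 1 < m ∧ p (iEdge q)) : Set (Fin n × Fin m)) := by
    intro q hq q' hq' h
    simp only [coe_filter, Set.mem_setOf_eq, mem_univ, true_and] at hq hq'
    rw [iEdge, iEdge, Sym2.eq_iff] at h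
    rcases h with ⟨h1, _⟩ | ⟨h1, h2⟩
    · exact Sum.inr.inj h1
    · have e1 := Prod.ext_iff.mp (Sum.inr.inj h1)
      have e2 := Prod.ext_iff.mp (Sum.inr.inj h2)
      have e3 := congrArg Fin.val e1.2
      have e4 := congrArg Fin.val e2.2
      rw [finSucc2_val _ hq'.1] at e3
      rw [finSucc2_val _ hq.1] at e4
      exact absurd (e4 ▸ e3) (by omega)
  have hinj3 : Set.InjOn (sEdge (n := n) (m := m))
      (↑((univ : Finset (Fin n × Fin m)).filter fun q => p (sEdge q)) : Set (Fin n × Fin m)) := by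
    intro q _ q' _ h
    rw [sEdge, sEdge, Sym2.eq_iff] at h
    rcases h with ⟨_, h2⟩ | ⟨h1, _⟩
    · exact Sum.inr.inj h2
    · exact absurd h1 (by simp)
  have hd1 : Disjoint
      (((univ : Finset (Fin n)).filter fun j => j.val + 1 < n ∧ p (bEdge j)).image bEdge)
      (((univ : Finset (Fin n × Fin m)).filter fun q => q.2.val + 1 < m ∧ p (iEdge q)).image iEdge) := by
    rw [Finset.disjoint_left]
    rintro e h1 h2
    simp only [mem_image] at h1 h2
    obtain ⟨j, _, rfl⟩ := h1
    obtain ⟨q, _, hq⟩ := h2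
    rw [iEdge, bEdge, Sym2.eq_iff] at hq
    simp at hq
  have hd2 : Disjoint
      ((((univ : Finset (Fin n)).filter fun j => j.val + 1 < n ∧ p (bEdge j)).image bEdge)
        ∪ (((univ : Finset (Fin n × Fin m)).filter fun q => q.2.val + 1 < m ∧ p (iEdge q)).image iEdge))
      (((univ : Finset (Fin n × Fin m)).filter fun q => p (sEdge q)).image sEdge) := by
    rw [Finset.disjoint_left]
    rintro e h1 h2
    simp only [mem_union, mem_image] at h1 h2
    obtain ⟨q, _, hq⟩ := h2
    rcases h1 with ⟨j, _, hj⟩ | ⟨r, _, hr⟩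
    · rw [← hj, bEdge, sEdge, Sym2.eq_iff] at hq
      simp at hq
    · rw [← hr, iEdge, sEdge, Sym2.eq_iff] at hq
      simp at hq
  rw [himg, card_union_of_disjoint hd2, card_union_of_disjoint hd1,
    card_image_of_injOn hinj1, card_image_of_injOn hinj2, card_image_of_injOn hinj3]

def cpLabel (n m F t : ℕ) : (Fin n ⊕ Fin n × Fin m) → (Fin n ⊕ Fin n × Fin m) → ℕ
  | Sum.inl j, Sum.inl k => if min j.val k.val < F + 1 then 1 else 0
  | Sum.inl _, Sum.inr q => if q.1.val < F ∨ (q.1.val = F ∧ q.2.val < t) then 1 else 0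
  | Sum.inr q, Sum.inl _ => if q.1.val < F ∨ (q.1.val = F ∧ q.2.val < t) then 1 else 0
  | Sum.inr q, Sum.inr r =>
      if min q.1.val r.1.val < F ∨ (min q.1.val r.1.val = F ∧ min q.2.val r.2.val < t)
      then 1 else 0

lemma cpLabel_comm (n m F t : ℕ) (u v : Fin n ⊕ Fin n × Fin m) :
    cpLabel n m F t u v = cpLabel n m F t v u := by
  rcases u with j | q <;> rcases v with k | r <;>
    simp only [cpLabel] <;> rw [min_comm]
  rw [min_comm q.2.val r.2.val]

noncomputable def cpF (n m F t : ℕ) : Sym2 (Fin n ⊕ Fin n × Fin m) → ℕ :=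
  Sym2.lift ⟨cpLabel n m F t, cpLabel_comm n m F t⟩

lemma cpF_mk (n m F t : ℕ) (u v : Fin n ⊕ Fin n × Fin m) :
    cpF n m F t s(u, v) = cpLabel n m F t u v :=
  Sym2.lift_mk _ _ _

lemma cpF_mem (n m F t : ℕ) (e : Sym2 (Fin n ⊕ Fin n × Fin m)) :
    cpF n m F t e = 0 ∨ cpF n m F t e = 1 := by
  induction e using Sym2.ind with
  | _ u v =>
    rw [cpF_mk]
    rcases u with j | q <;> rcases v with k | r <;> simp only [cpLabel] <;>
      split_ifs <;> simp

lemma cpF_bEdge (n m F t : ℕ) (j : Fin n) (h : j.val + 1 < n) :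
    cpF n m F t (bEdge j) = if j.val < F + 1 then 1 else 0 := by
  rw [bEdge, cpF_mk]
  simp only [cpLabel]
  have hm : min j.val (finSucc2 j).val = j.val := by
    rw [finSucc2_val _ h]; omega
  rw [hm]

lemma cpF_iEdge (n m F t : ℕ) (q : Fin n × Fin m) (h : q.2.val + 1 < m) :
    cpF n m F t (iEdge q) = if q.1.val < F ∨ (q.1.val = F ∧ q.2.val < t) then 1 else 0 := by
  rw [iEdge, cpF_mk]
  simp only [cpLabel]
  have hm : min q.2.val (finSucc2 q.2).val = q.2.val := by
    rw [finSucc2_val _ h]; omega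
  rw [hm, min_self]

lemma cpF_sEdge (n m F t : ℕ) (q : Fin n × Fin m) :
    cpF n m F t (sEdge q) = if q.1.val < F ∨ (q.1.val = F ∧ q.2.val < t) then 1 else 0 := by
  rw [sEdge, cpF_mk]
  rfl

lemma inducedLabel_eq_one_iff {α : Type*} [Fintype α] (G : SimpleGraph α) (f : Sym2 α → ℕ)
    (h01 : ∀ e, f e = 0 ∨ f e = 1) (v : α) :
    inducedLabel G f v = 1 ↔ ∀ u, G.Adj v u → f s(v, u) = 1 := by
  rw [inducedLabel]
  constructor
  · intro h u hu
    by_contra hne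
    have h0 : f s(v, u) = 0 := (h01 _).resolve_right hne
    rw [Finset.prod_eq_zero (Finset.mem_filter.mpr ⟨Finset.mem_univ _, hu⟩) h0] at h
    exact absurd h (by norm_num)
  · intro h
    exact Finset.prod_eq_one fun u hu => h u (Finset.mem_filter.mp hu).2

lemma inducedLabel_mem {α : Type*} [Fintype α] (G : SimpleGraph α) (f : Sym2 α → ℕ)
    (h01 : ∀ e, f e = 0 ∨ f e = 1) (v : α) :
    inducedLabel G f v = 0 ∨ inducedLabel G f v = 1 := by
  by_cases hall : ∀ u, G.Adj v u → f s(v, u) = 1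
  · exact Or.inr ((inducedLabel_eq_one_iff G f h01 v).mpr hall)
  · push_neg at hall
    obtain ⟨u, hu, hne⟩ := hall
    left
    rw [inducedLabel]
    exact Finset.prod_eq_zero (Finset.mem_filter.mpr ⟨Finset.mem_univ _, hu⟩)
      ((h01 _).resolve_right hne)

lemma card_filter_fin_s5 (k : ℕ) (p : ℕ → Prop) [DecidablePred p] :
    ((univ : Finset (Fin k)).filter (fun x => p x.val)).card = ((range k).filter p).card := by
  apply Finset.card_bij (fun x _ => x.val)
  · intro a ha; simp only [mem_filter, mem_range] at *; exact ⟨a.isLt, ha.2⟩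
  · intro a _ b _ h; exact Fin.val_injective h
  · intro b hb; simp only [mem_filter, mem_range] at hb
    exact ⟨⟨b, hb.1⟩, by simp [hb.2], rfl⟩

lemma card_filter_sum {β γ : Type*} [Fintype β] [Fintype γ] (P : β ⊕ γ → Prop)
    [DecidablePred P] :
    ((univ : Finset (β ⊕ γ)).filter P).card
      = ((univ : Finset β).filter fun x => P (Sum.inl x)).card
      + ((univ : Finset γ).filter fun x => P (Sum.inr x)).card := by
  classical
  rw [← Finset.card_toLeft_add_card_toRight]
  congr 1 <;> congr 1 <;> ext x <;> simp

lemma card_filter_prod {k l : ℕ} (p₁ p₂ q₁ q₂ : ℕ → Prop) [DecidablePred p₁]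
    [DecidablePred p₂] [DecidablePred q₁] [DecidablePred q₂]
    (hd : ∀ v, ¬ (p₁ v ∧ p₂ v)) :
    ((univ : Finset (Fin k × Fin l)).filter fun q =>
        (p₁ q.1.val ∧ q₁ q.2.val) ∨ (p₂ q.1.val ∧ q₂ q.2.val)).card
      = ((range k).filter p₁).card * ((range l).filter q₁).card
        + ((range k).filter p₂).card * ((range l).filter q₂).card := by
  rw [filter_or, card_union_of_disjoint]
  · rw [← Finset.univ_product_univ,
      filter_product (fun a : Fin k => p₁ a.val) (fun a : Fin l => q₁ a.val),
      filter_product (fun a : Fin k => p₂ a.val) (fun a : Fin l => q₂ a.val),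
      Finset.card_product, Finset.card_product,
      card_filter_fin_s5, card_filter_fin_s5, card_filter_fin_s5, card_filter_fin_s5]
  · rw [Finset.disjoint_left]
    rintro q h1 h2
    simp only [mem_filter] at h1 h2
    exact hd q.1.val ⟨h1.2.1, h2.2.1⟩

/-- For odd `n ≥ 3` and odd `m ≥ 1`, the corona graph `P_n ∘ P_m` admits an
edge labeling with `e_f(0) = nm - 1`, `e_f(1) = nm`, `v_f(0) = (nm + n + 2)/2`,
`v_f(1) = (n + nm - 2)/2`; in particular it is total edge product cordial. -/
theorem corona_path_path_odd_odd_counts (n m : ℕ) (hn : 3 ≤ n) (hno : Odd n)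
    (hm : 1 ≤ m) (hmo : Odd m) :
    ∃ f : Sym2 (Fin n ⊕ Fin n × Fin m) → ℕ,
      (∀ e ∈ (corona (pathGraph n) (pathGraph m)).edgeSet, f e = 0 ∨ f e = 1) ∧
      eCount (corona (pathGraph n) (pathGraph m)) f 0 = n * m - 1 ∧
      eCount (corona (pathGraph n) (pathGraph m)) f 1 = n * m ∧
      vCount (corona (pathGraph n) (pathGraph m)) f 0 = (n * m + n + 2) / 2 ∧
      vCount (corona (pathGraph n) (pathGraph m)) f 1 = (n + n * m - 2) / 2 ∧
      |((vCount (corona (pathGraph n) (pathGraph m)) f 0 : ℤ) +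
          (eCount (corona (pathGraph n) (pathGraph m)) f 0 : ℤ)) -
        ((vCount (corona (pathGraph n) (pathGraph m)) f 1 : ℤ) +
          (eCount (corona (pathGraph n) (pathGraph m)) f 1 : ℤ))| ≤ 1 := by
  obtain ⟨a, rfl⟩ := hno
  obtain ⟨c, rfl⟩ := hmo
  obtain ⟨b, rfl⟩ : ∃ b, a = b + 1 := ⟨a - 1, by omega⟩
  -- edge counts
  have he1 : eCount (corona (pathGraph (2*(b+1)+1)) (pathGraph (2*c+1))) (cpF (2*(b+1)+1) (2*c+1) (b+1) c) 1 = (b+2) + ((b+1)*(2*c) + 1*c) + ((b+1)*(2*c+1) + 1*c) := by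
    unfold eCount
    rw [corona_filter_card (2*(b+1)+1) (2*c+1) (fun e => (cpF (2*(b+1)+1) (2*c+1) (b+1) c) e = 1)]
    have hb1 : ((univ : Finset (Fin (2*(b+1)+1))).filter fun j => j.val + 1 < (2*(b+1)+1) ∧ (cpF (2*(b+1)+1) (2*c+1) (b+1) c) (bEdge j) = 1).card = b + 2 := by
      have hiff : ∀ j ∈ (univ : Finset (Fin (2*(b+1)+1))),
          (j.val + 1 < (2*(b+1)+1) ∧ (cpF (2*(b+1)+1) (2*c+1) (b+1) c) (bEdge j) = 1) ↔ (j.val + 1 < (2*(b+1)+1) ∧ j.val < b + 2) := by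
        intro j _
        constructor
        · rintro ⟨h1, h2⟩
          refine ⟨h1, ?_⟩
          rw [cpF_bEdge _ _ _ _ _ h1] at h2
          by_contra hcon
          rw [if_neg (by omega)] at h2
          exact absurd h2 (by norm_num)
        · rintro ⟨h1, h2⟩
          exact ⟨h1, by rw [cpF_bEdge _ _ _ _ _ h1, if_pos (by omega)]⟩
      rw [filter_congr hiff, card_filter_fin_s5 (2*(b+1)+1) (fun v => v + 1 < (2*(b+1)+1) ∧ v < b + 2),
        show (range (2*(b+1)+1)).filter (fun v => v + 1 < (2*(b+1)+1) ∧ v < b + 2) = range (b + 2) from by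
          ext v; simp only [mem_filter, mem_range]; omega,
        card_range]
    have hi1 : ((univ : Finset (Fin (2*(b+1)+1) × Fin (2*c+1))).filter fun q => q.2.val + 1 < (2*c+1) ∧ (cpF (2*(b+1)+1) (2*c+1) (b+1) c) (iEdge q) = 1).card
        = (b+1)*(2*c) + 1*c := by
      have hiff : ∀ q ∈ (univ : Finset (Fin (2*(b+1)+1) × Fin (2*c+1))),
          (q.2.val + 1 < (2*c+1) ∧ (cpF (2*(b+1)+1) (2*c+1) (b+1) c) (iEdge q) = 1) ↔
          ((q.1.val < b+1 ∧ q.2.val + 1 < (2*c+1)) ∨ (q.1.val = b+1 ∧ q.2.val < c)) := by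
        intro q _
        constructor
        · rintro ⟨h1, h2⟩
          rw [cpF_iEdge _ _ _ _ _ h1] at h2
          split_ifs at h2 with hc
          omega
        · rintro (⟨ha, hb⟩ | ⟨ha, hb⟩)
          · exact ⟨hb, by rw [cpF_iEdge _ _ _ _ _ hb, if_pos (Or.inl ha)]⟩
          · have hlt : q.2.val + 1 < (2*c+1) := by omega
            exact ⟨hlt, by rw [cpF_iEdge _ _ _ _ _ hlt, if_pos (Or.inr ⟨ha, hb⟩)]⟩
      rw [filter_congr hiff,
        card_filter_prod (fun v => v < b+1) (fun v => v = b+1) (fun x => x + 1 < (2*c+1)) (fun x => x < c)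
          (fun v => by omega),
        show (range (2*(b+1)+1)).filter (fun v => v < b+1) = range (b+1) from by
          ext v; simp only [mem_filter, mem_range]; omega,
        show (range (2*c+1)).filter (fun x => x + 1 < (2*c+1)) = range (2*c) from by
          ext v; simp only [mem_filter, mem_range]; omega,
        show (range (2*(b+1)+1)).filter (fun v => v = b+1) = {b+1} from by
          ext v; simp only [mem_filter, mem_range, mem_singleton]; omega,
        show (range (2*c+1)).filter (fun x => x < c) = range c from by
          ext v; simp only [mem_filter, mem_range]; omega,
        card_range, card_range, card_range, card_singleton]
    have hs1 : ((univ : Finset (Fin (2*(b+1)+1) × Fin (2*c+1))).filter fun q => (cpF (2*(b+1)+1) (2*c+1) (b+1) c) (sEdge q) = 1).card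
        = (b+1)*(2*c+1) + 1*c := by
      have hiff : ∀ q ∈ (univ : Finset (Fin (2*(b+1)+1) × Fin (2*c+1))),
          ((cpF (2*(b+1)+1) (2*c+1) (b+1) c) (sEdge q) = 1) ↔
          ((q.1.val < b+1 ∧ True) ∨ (q.1.val = b+1 ∧ q.2.val < c)) := by
        intro q _
        rw [cpF_sEdge]
        constructor
        · intro h2
          split_ifs at h2 with hc
          tauto
        · rintro (⟨ha, -⟩ | ⟨ha, hb⟩)
          · rw [if_pos (Or.inl ha)]
          · rw [if_pos (Or.inr ⟨ha, hb⟩)]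
      rw [filter_congr hiff,
        card_filter_prod (fun v => v < b+1) (fun v => v = b+1) (fun _ => True) (fun x => x < c)
          (fun v => by omega),
        show (range (2*(b+1)+1)).filter (fun v => v < b+1) = range (b+1) from by
          ext v; simp only [mem_filter, mem_range]; omega,
        show (range (2*c+1)).filter (fun _ => True) = range (2*c+1) from filter_true_of_mem (by tauto),
        show (range (2*(b+1)+1)).filter (fun v => v = b+1) = {b+1} from by
          ext v; simp only [mem_filter, mem_range, mem_singleton]; omega,
        show (range (2*c+1)).filter (fun x => x < c) = range c from by
          ext v; simp only [mem_filter, mem_range]; omega,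
        card_range, card_range, card_range, card_singleton]
    rw [hb1, hi1, hs1]
  have he0 : eCount (corona (pathGraph (2*(b+1)+1)) (pathGraph (2*c+1))) (cpF (2*(b+1)+1) (2*c+1) (b+1) c) 0 = b + ((b+1)*(2*c) + 1*c) + ((b+1)*(2*c+1) + 1*(c+1)) := by
    unfold eCount
    rw [corona_filter_card (2*(b+1)+1) (2*c+1) (fun e => (cpF (2*(b+1)+1) (2*c+1) (b+1) c) e = 0)]
    have hb0 : ((univ : Finset (Fin (2*(b+1)+1))).filter fun j => j.val + 1 < (2*(b+1)+1) ∧ (cpF (2*(b+1)+1) (2*c+1) (b+1) c) (bEdge j) = 0).card = b := by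
      have hiff : ∀ j ∈ (univ : Finset (Fin (2*(b+1)+1))),
          (j.val + 1 < (2*(b+1)+1) ∧ (cpF (2*(b+1)+1) (2*c+1) (b+1) c) (bEdge j) = 0) ↔ (j.val + 1 < (2*(b+1)+1) ∧ b + 2 ≤ j.val) := by
        intro j _
        constructor
        · rintro ⟨h1, h2⟩
          rw [cpF_bEdge _ _ _ _ _ h1] at h2
          split_ifs at h2 with hc
          exact ⟨h1, by omega⟩
        · rintro ⟨h1, h2⟩
          exact ⟨h1, by rw [cpF_bEdge _ _ _ _ _ h1, if_neg (by omega)]⟩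
      rw [filter_congr hiff, card_filter_fin_s5 (2*(b+1)+1) (fun v => v + 1 < (2*(b+1)+1) ∧ b + 2 ≤ v),
        show (range (2*(b+1)+1)).filter (fun v => v + 1 < (2*(b+1)+1) ∧ b + 2 ≤ v) = Ico (b+2) (2*(b+1)) from by
          ext v; simp only [mem_filter, mem_range, mem_Ico]; omega,
        Nat.card_Ico]
      omega
    have hi0 : ((univ : Finset (Fin (2*(b+1)+1) × Fin (2*c+1))).filter fun q => q.2.val + 1 < (2*c+1) ∧ (cpF (2*(b+1)+1) (2*c+1) (b+1) c) (iEdge q) = 0).card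
        = (b+1)*(2*c) + 1*c := by
      have hiff : ∀ q ∈ (univ : Finset (Fin (2*(b+1)+1) × Fin (2*c+1))),
          (q.2.val + 1 < (2*c+1) ∧ (cpF (2*(b+1)+1) (2*c+1) (b+1) c) (iEdge q) = 0) ↔
          ((b+2 ≤ q.1.val ∧ q.2.val + 1 < (2*c+1)) ∨ (q.1.val = b+1 ∧ (c ≤ q.2.val ∧ q.2.val + 1 < (2*c+1)))) := by
        intro q _
        constructor
        · rintro ⟨h1, h2⟩
          rw [cpF_iEdge _ _ _ _ _ h1] at h2
          split_ifs at h2 with hc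
          omega
        · rintro (⟨ha, hb⟩ | ⟨ha, hb⟩)
          · exact ⟨hb, by rw [cpF_iEdge _ _ _ _ _ hb, if_neg (by omega)]⟩
          · exact ⟨hb.2, by rw [cpF_iEdge _ _ _ _ _ hb.2, if_neg (by omega)]⟩
      rw [filter_congr hiff,
        card_filter_prod (fun v => b+2 ≤ v) (fun v => v = b+1) (fun x => x + 1 < (2*c+1))
          (fun x => c ≤ x ∧ x + 1 < (2*c+1)) (fun v => by omega),
        show (range (2*(b+1)+1)).filter (fun v => b+2 ≤ v) = Ico (b+2) (2*(b+1)+1) from by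
          ext v; simp only [mem_filter, mem_range, mem_Ico]; omega,
        show (range (2*c+1)).filter (fun x => x + 1 < (2*c+1)) = range (2*c) from by
          ext v; simp only [mem_filter, mem_range]; omega,
        show (range (2*(b+1)+1)).filter (fun v => v = b+1) = {b+1} from by
          ext v; simp only [mem_filter, mem_range, mem_singleton]; omega,
        show (range (2*c+1)).filter (fun x => c ≤ x ∧ x + 1 < (2*c+1)) = Ico c (2*c) from by
          ext v; simp only [mem_filter, mem_range, mem_Ico]; omega,
        card_range, card_singleton, Nat.card_Ico, Nat.card_Ico,
        show (2*(b+1)+1) - (b+2) = b+1 from by omega, show 2*c - c = c from by omega]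
    have hs0 : ((univ : Finset (Fin (2*(b+1)+1) × Fin (2*c+1))).filter fun q => (cpF (2*(b+1)+1) (2*c+1) (b+1) c) (sEdge q) = 0).card
        = (b+1)*(2*c+1) + 1*(c+1) := by
      have hiff : ∀ q ∈ (univ : Finset (Fin (2*(b+1)+1) × Fin (2*c+1))),
          ((cpF (2*(b+1)+1) (2*c+1) (b+1) c) (sEdge q) = 0) ↔
          ((b+2 ≤ q.1.val ∧ True) ∨ (q.1.val = b+1 ∧ c ≤ q.2.val)) := by
        intro q _
        rw [cpF_sEdge]
        simp only [and_true]
        constructor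
        · intro h2
          split_ifs at h2 with hc
          omega
        · intro h
          rw [if_neg (by omega)]
      rw [filter_congr hiff,
        card_filter_prod (fun v => b+2 ≤ v) (fun v => v = b+1) (fun _ => True) (fun x => c ≤ x)
          (fun v => by omega),
        show (range (2*(b+1)+1)).filter (fun v => b+2 ≤ v) = Ico (b+2) (2*(b+1)+1) from by
          ext v; simp only [mem_filter, mem_range, mem_Ico]; omega,
        show (range (2*c+1)).filter (fun _ => True) = range (2*c+1) from filter_true_of_mem (by tauto),
        show (range (2*(b+1)+1)).filter (fun v => v = b+1) = {b+1} from by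
          ext v; simp only [mem_filter, mem_range, mem_singleton]; omega,
        show (range (2*c+1)).filter (fun x => c ≤ x) = Ico c (2*c+1) from by
          ext v; simp only [mem_filter, mem_range, mem_Ico]; omega,
        card_range, card_singleton, Nat.card_Ico, Nat.card_Ico,
        show (2*(b+1)+1) - (b+2) = b+1 from by omega, show (2*c+1) - c = c+1 from by omega]
    rw [hb0, hi0, hs0]
  -- vertex characterizations
  have hPl : ∀ j : Fin (2*(b+1)+1),
      (∀ u, (corona (pathGraph (2*(b+1)+1)) (pathGraph (2*c+1))).Adj (Sum.inl j) u → (cpF (2*(b+1)+1) (2*c+1) (b+1) c) s(Sum.inl j, u) = 1) ↔ j.val < b+1 := by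
    intro j
    constructor
    · intro h
      have ht : (c:ℕ) < 2*c+1 := by omega
      have hadj : (corona (pathGraph (2*(b+1)+1)) (pathGraph (2*c+1))).Adj (Sum.inl j) (Sum.inr (j, (⟨c, ht⟩ : Fin (2*c+1)))) := rfl
      have h2 := h _ hadj
      rw [cpF_mk] at h2
      simp only [cpLabel] at h2
      split_ifs at h2 with hc
      omega
    · intro hj u hadj
      have hadj' : coronaAdj (pathGraph (2*(b+1)+1)) (pathGraph (2*c+1)) (Sum.inl j) u := hadj
      rcases u with k | q
      · rw [cpF_mk]
        simp only [cpLabel]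
        rw [if_pos (by have := min_le_left j.val k.val; omega)]
      · simp only [coronaAdj] at hadj'
        rw [cpF_mk]
        simp only [cpLabel]
        rw [if_pos (Or.inl (by rw [← hadj']; exact hj))]
  have hPr : ∀ q : Fin (2*(b+1)+1) × Fin (2*c+1),
      (∀ u, (corona (pathGraph (2*(b+1)+1)) (pathGraph (2*c+1))).Adj (Sum.inr q) u → (cpF (2*(b+1)+1) (2*c+1) (b+1) c) s(Sum.inr q, u) = 1) ↔
      (q.1.val < b+1 ∨ (q.1.val = b+1 ∧ q.2.val < c)) := by
    rintro ⟨q1, q2⟩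
    constructor
    · intro h
      have hadj : (corona (pathGraph (2*(b+1)+1)) (pathGraph (2*c+1))).Adj (Sum.inr (q1, q2)) (Sum.inl q1) := rfl
      have h2 := h _ hadj
      rw [cpF_mk] at h2
      simp only [cpLabel] at h2
      split_ifs at h2 with hc
      exact hc
    · intro hcond u hadj
      dsimp only at hcond
      have hadj' : coronaAdj (pathGraph (2*(b+1)+1)) (pathGraph (2*c+1)) (Sum.inr (q1, q2)) u := hadj
      rcases u with k | ⟨r1, r2⟩
      · simp only [coronaAdj] at hadj'
        rw [cpF_mk]
        simp only [cpLabel]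
        rw [if_pos hcond]
      · simp only [coronaAdj] at hadj'
        rw [cpF_mk]
        simp only [cpLabel]
        have hmin1 : min q1.val r1.val = q1.val := by rw [← hadj'.1, min_self]
        have hmin2 : min q2.val r2.val ≤ q2.val := min_le_left _ _
        have hcond2 : min q1.val r1.val < b+1 ∨ (min q1.val r1.val = b+1 ∧ min q2.val r2.val < c) := by
          rw [hmin1]
          rcases hcond with h | ⟨h1, h2⟩
          · exact Or.inl h
          · exact Or.inr ⟨h1, by omega⟩
        rw [if_pos hcond2]
  have h01 : ∀ e, (cpF (2*(b+1)+1) (2*c+1) (b+1) c) e = 0 ∨ (cpF (2*(b+1)+1) (2*c+1) (b+1) c) e = 1 := cpF_mem _ _ _ _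
  have hv1 : vCount (corona (pathGraph (2*(b+1)+1)) (pathGraph (2*c+1))) (cpF (2*(b+1)+1) (2*c+1) (b+1) c) 1 = (b+1) + ((b+1)*(2*c+1) + 1*c) := by
    unfold vCount
    rw [filter_congr (fun v _ => inducedLabel_eq_one_iff (corona (pathGraph (2*(b+1)+1)) (pathGraph (2*c+1))) (cpF (2*(b+1)+1) (2*c+1) (b+1) c) h01 v),
      card_filter_sum (fun v : Fin (2*(b+1)+1) ⊕ Fin (2*(b+1)+1) × Fin (2*c+1) =>
        ∀ u, (corona (pathGraph (2*(b+1)+1)) (pathGraph (2*c+1))).Adj v u → (cpF (2*(b+1)+1) (2*c+1) (b+1) c) s(v, u) = 1)]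
    have hl : ((univ : Finset (Fin (2*(b+1)+1))).filter fun j =>
        ∀ u, (corona (pathGraph (2*(b+1)+1)) (pathGraph (2*c+1))).Adj (Sum.inl j) u → (cpF (2*(b+1)+1) (2*c+1) (b+1) c) s(Sum.inl j, u) = 1).card = b+1 := by
      rw [filter_congr (fun j _ => hPl j), card_filter_fin_s5 (2*(b+1)+1) (fun v => v < b+1),
        show (range (2*(b+1)+1)).filter (fun v => v < b+1) = range (b+1) from by
          ext v; simp only [mem_filter, mem_range]; omega,
        card_range]
    have hr : ((univ : Finset (Fin (2*(b+1)+1) × Fin (2*c+1))).filter fun q =>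
        ∀ u, (corona (pathGraph (2*(b+1)+1)) (pathGraph (2*c+1))).Adj (Sum.inr q) u → (cpF (2*(b+1)+1) (2*c+1) (b+1) c) s(Sum.inr q, u) = 1).card = (b+1)*(2*c+1) + 1*c := by
      rw [filter_congr (fun q _ => (hPr q).trans (by simp only [and_true] :
          (q.1.val < b+1 ∨ (q.1.val = b+1 ∧ q.2.val < c)) ↔
          ((q.1.val < b+1 ∧ True) ∨ (q.1.val = b+1 ∧ q.2.val < c)))),
        card_filter_prod (fun v => v < b+1) (fun v => v = b+1) (fun _ => True) (fun x => x < c)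
          (fun v => by omega),
        show (range (2*(b+1)+1)).filter (fun v => v < b+1) = range (b+1) from by
          ext v; simp only [mem_filter, mem_range]; omega,
        show (range (2*c+1)).filter (fun _ => True) = range (2*c+1) from filter_true_of_mem (by tauto),
        show (range (2*(b+1)+1)).filter (fun v => v = b+1) = {b+1} from by
          ext v; simp only [mem_filter, mem_range, mem_singleton]; omega,
        show (range (2*c+1)).filter (fun x => x < c) = range c from by
          ext v; simp only [mem_filter, mem_range]; omega,
        card_range, card_range, card_range, card_singleton]
    rw [hl, hr]
  have hv0 : vCount (corona (pathGraph (2*(b+1)+1)) (pathGraph (2*c+1))) (cpF (2*(b+1)+1) (2*c+1) (b+1) c) 0 = (b+2) + ((b+1)*(2*c+1) + 1*(c+1)) := by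
    unfold vCount
    have hzero : ∀ v, (inducedLabel (corona (pathGraph (2*(b+1)+1)) (pathGraph (2*c+1))) (cpF (2*(b+1)+1) (2*c+1) (b+1) c) v = 0) ↔
        ¬ (∀ u, (corona (pathGraph (2*(b+1)+1)) (pathGraph (2*c+1))).Adj v u → (cpF (2*(b+1)+1) (2*c+1) (b+1) c) s(v, u) = 1) := by
      intro v
      rw [← inducedLabel_eq_one_iff (corona (pathGraph (2*(b+1)+1)) (pathGraph (2*c+1))) (cpF (2*(b+1)+1) (2*c+1) (b+1) c) h01 v]
      rcases inducedLabel_mem (corona (pathGraph (2*(b+1)+1)) (pathGraph (2*c+1))) (cpF (2*(b+1)+1) (2*c+1) (b+1) c) h01 v with h | h <;> rw [h] <;> simp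
    rw [filter_congr (fun v _ => hzero v),
      card_filter_sum (fun v : Fin (2*(b+1)+1) ⊕ Fin (2*(b+1)+1) × Fin (2*c+1) =>
        ¬ (∀ u, (corona (pathGraph (2*(b+1)+1)) (pathGraph (2*c+1))).Adj v u → (cpF (2*(b+1)+1) (2*c+1) (b+1) c) s(v, u) = 1))]
    have hl : ((univ : Finset (Fin (2*(b+1)+1))).filter fun j =>
        ¬ (∀ u, (corona (pathGraph (2*(b+1)+1)) (pathGraph (2*c+1))).Adj (Sum.inl j) u → (cpF (2*(b+1)+1) (2*c+1) (b+1) c) s(Sum.inl j, u) = 1)).card = b+2 := by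
      rw [filter_congr (fun j _ => (not_congr (hPl j)).trans (by omega :
          (¬ j.val < b+1) ↔ b+1 ≤ j.val)),
        card_filter_fin_s5 (2*(b+1)+1) (fun v => b+1 ≤ v),
        show (range (2*(b+1)+1)).filter (fun v => b+1 ≤ v) = Ico (b+1) (2*(b+1)+1) from by
          ext v; simp only [mem_filter, mem_range, mem_Ico]; omega,
        Nat.card_Ico]
      omega
    have hr : ((univ : Finset (Fin (2*(b+1)+1) × Fin (2*c+1))).filter fun q =>
        ¬ (∀ u, (corona (pathGraph (2*(b+1)+1)) (pathGraph (2*c+1))).Adj (Sum.inr q) u → (cpF (2*(b+1)+1) (2*c+1) (b+1) c) s(Sum.inr q, u) = 1)).card = (b+1)*(2*c+1) + 1*(c+1) := by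
      rw [filter_congr (fun q _ => (not_congr (hPr q)).trans (by simp only [and_true]; omega :
          (¬ (q.1.val < b+1 ∨ (q.1.val = b+1 ∧ q.2.val < c))) ↔
          ((b+2 ≤ q.1.val ∧ True) ∨ (q.1.val = b+1 ∧ c ≤ q.2.val)))),
        card_filter_prod (fun v => b+2 ≤ v) (fun v => v = b+1) (fun _ => True) (fun x => c ≤ x)
          (fun v => by omega),
        show (range (2*(b+1)+1)).filter (fun v => b+2 ≤ v) = Ico (b+2) (2*(b+1)+1) from by
          ext v; simp only [mem_filter, mem_range, mem_Ico]; omega,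
        show (range (2*c+1)).filter (fun _ => True) = range (2*c+1) from filter_true_of_mem (by tauto),
        show (range (2*(b+1)+1)).filter (fun v => v = b+1) = {b+1} from by
          ext v; simp only [mem_filter, mem_range, mem_singleton]; omega,
        show (range (2*c+1)).filter (fun x => c ≤ x) = Ico c (2*c+1) from by
          ext v; simp only [mem_filter, mem_range, mem_Ico]; omega,
        card_range, card_singleton, Nat.card_Ico, Nat.card_Ico,
        show (2*(b+1)+1) - (b+2) = b+1 from by omega, show (2*c+1) - c = c+1 from by omega]
    rw [hl, hr]
  refine ⟨(cpF (2*(b+1)+1) (2*c+1) (b+1) c), fun e _ => cpF_mem _ _ _ _ e, ?_, ?_, ?_, ?_, ?_⟩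
  · rw [he0, show (2*(b+1)+1)*(2*c+1) = (b + ((b+1)*(2*c) + 1*c) + ((b+1)*(2*c+1) + 1*(c+1))) + 1 from by ring,
      Nat.add_sub_cancel]
  · rw [he1]; ring
  · rw [hv0, show (2*(b+1)+1)*(2*c+1) + (2*(b+1)+1) + 2 = ((b+2) + ((b+1)*(2*c+1) + 1*(c+1))) * 2 from by ring,
      Nat.mul_div_cancel _ (by norm_num)]
  · rw [hv1, show (2*(b+1)+1) + (2*(b+1)+1)*(2*c+1) = ((b+1) + ((b+1)*(2*c+1) + 1*c)) * 2 + 2 from by ring,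
      Nat.add_sub_cancel, Nat.mul_div_cancel _ (by norm_num)]
  · rw [hv0, hv1, he0, he1,
      show (((((b+2) + ((b+1)*(2*c+1) + 1*(c+1))) : ℕ) : ℤ) +
          (((b + ((b+1)*(2*c) + 1*c) + ((b+1)*(2*c+1) + 1*(c+1))) : ℕ) : ℤ)) -
        (((((b+1) + ((b+1)*(2*c+1) + 1*c)) : ℕ) : ℤ) +
          ((((b+2) + ((b+1)*(2*c) + 1*c) + ((b+1)*(2*c+1) + 1*c)) : ℕ) : ℤ)) = (1:ℤ) from by
        push_cast; ring]
    norm_num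
end
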